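/- arXiv:2407.15001 — 5 statements merged into one kernel-verified Lean document; each statement's English description precedes it below -/
import Mathlib

section
/- Fix N ∈ ℕ with 2 ≤ |n⃗| ≤ N, fix i ∈ {1,…,p}, and let Q^{(i)}(x) = ∑_{l=0}^{n_i−1} C^{(i),l} (x+α_i+1)_l with C^{(i),l} = (−1)^{|n⃗|−1}(N+1−|n⃗|)! / [(n_i−1)! (β+1)_{|n⃗|−1} (α_i+β+|n⃗|)_{N+2−|n⃗|}] · [∏_{k=1}^p (α_k+β+|n⃗|)_{n_k}] / [∏_{k≠i} (α_k−α_i)_{n_k}] · (−n_i+1)_l (α_i+β+|n⃗|)_l / [l! (α_i+1)_l (α_i+β+N+2)_l] · ∏_{k≠i} (α_i−α_k−n_k+1)_l/(α_i−α_k+1)_l. Then for every j ∈ {0,…,|n⃗|−1}: ∑_{k=0}^N (β+N−k+1)_j Q^{(i)}(k) w_i(k) = [(−1)^{|n⃗|−1}(N+1−|n⃗|)! ∏_{m=1}^p (α_m+β+|n⃗|)_{n_m} / (N! (β+1+j)_{|n⃗|−1−j})] · [Γ(α_i+β+|n⃗|)(α_i+β+N+2)_j / ((n_i−1)! Γ(α_i+β+2+j)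 ∏_{m≠i}(α_m−α_i)_{n_m})] · ∑_{l=0}^{n_i−1} [(−n_i+1)_l (α_i+β+N+2+j)_l (α_i+β+|n⃗|)_l ∏_{m≠i}(α_i+1−α_m−n_m)_l] / [l! (α_i+β+N+2)_l (α_i+β+2+j)_l ∏_{m≠i}(α_i+1−α_m)_l]. -/
open Finset

/-- The Pochhammer symbol (rising factorial) `(a)_m` for a real number `a`. -/
noncomputable def poch (a : ℝ) (m : ℕ) : ℝ := (ascPochhammer ℝ m).eval a

lemma poch_zero (a : ℝ) : poch a 0 = 1 := by simp [poch]

lemma poch_succ (a : ℝ) (m : ℕ) : poch a (m+1) = poch a m * (a + m) := by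
  simp [poch, ascPochhammer_succ_eval]

lemma poch_add (a : ℝ) (m k : ℕ) : poch a (m + k) = poch a m * poch (a + m) k := by
  have := congrArg (Polynomial.eval a) (ascPochhammer_mul (S := ℝ) m k)
  simpa [poch, Polynomial.eval_comp] using this.symm

lemma poch_pos {a : ℝ} (ha : 0 < a) (m : ℕ) : 0 < poch a m := by
  induction m with
  | zero => simp [poch_zero]
  | succ m ih => rw [poch_succ]; positivity

lemma poch_prod (a : ℝ) (m : ℕ) : poch a m = ∏ t ∈ range m, (a + t) := by
  induction m with
  | zero => simp [poch_zero]
  | succ m ih => rw [poch_succ, prod_range_succ, ih]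

lemma poch_ne_zero_of_nonint {a : ℝ} (h : ∀ z : ℤ, a ≠ (z : ℝ)) (m : ℕ) : poch a m ≠ 0 := by
  rw [poch_prod]
  refine prod_ne_zero_iff.2 fun t _ ht => ?_
  exact h (-(t:ℤ)) (by push_cast; linarith [sub_eq_zero.2 ht.symm, ht])

lemma Gamma_poch {a : ℝ} (ha : 0 < a) (m : ℕ) :
    Real.Gamma (a + m) = Real.Gamma a * poch a m := by
  induction m with
  | zero => simp [poch_zero]
  | succ m ih =>
    have h1 : a + (m+1:ℕ) = (a + m) + 1 := by push_cast; ring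
    have h2 : a + (m:ℝ) ≠ 0 := by positivity
    rw [h1, Real.Gamma_add_one h2, ih, poch_succ]; ring

lemma vandermonde_poch (N : ℕ) (a b : ℝ) :
    ∑ k ∈ range (N+1), (N.choose k : ℝ) * poch a k * poch b (N - k) = poch (a + b) N := by
  induction N generalizing a b with
  | zero => simp [poch_zero]
  | succ N ih =>
    rw [Finset.sum_range_succ']
    have e1 : ∀ k ∈ range (N+1), ((N+1).choose (k+1) : ℝ) * poch a (k+1) * poch b (N+1-(k+1))
        = (N.choose k : ℝ) * poch a (k+1) * poch b (N-k)
          + (N.choose (k+1) : ℝ) * poch a (k+1) * poch b (N+1-(k+1)) := by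
      intro k hk
      have h2 : N + 1 - (k+1) = N - k := by omega
      rw [h2, Nat.choose_succ_succ]
      push_cast; ring
    rw [Finset.sum_congr rfl e1, Finset.sum_add_distrib]
    have e2 : (∑ k ∈ range (N+1), (N.choose (k+1) : ℝ) * poch a (k+1) * poch b (N+1-(k+1)))
          + ((N+1).choose 0 : ℝ) * poch a 0 * poch b (N+1-0)
        = ∑ t ∈ range (N+1), (N.choose t : ℝ) * poch a t * poch b (N+1-t) := by
      have h1 : (∑ t ∈ range (N+1+1), (N.choose t : ℝ) * poch a t * poch b (N+1-t))
          = ∑ t ∈ range (N+1), (N.choose t : ℝ) * poch a t * poch b (N+1-t) := by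
        rw [Finset.sum_range_succ, Nat.choose_succ_self]; simp
      rw [← h1,
        Finset.sum_range_succ' (fun t => (N.choose t : ℝ) * poch a t * poch b (N+1-t))]
      simp [poch_zero]
    rw [add_assoc, e2]
    have e3 : ∀ k ∈ range (N+1), (N.choose k : ℝ) * poch a k * poch b (N+1-k)
        = (N.choose k : ℝ) * poch a k * poch b (N-k) * (b + (N-k:ℕ)) := by
      intro k hk
      simp only [mem_range] at hk
      have h2 : N + 1 - k = (N - k) + 1 := by omega
      rw [h2, poch_succ]; ring
    have e4 : ∀ k ∈ range (N+1), (N.choose k : ℝ) * poch a (k+1) * poch b (N-k)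
        = (N.choose k : ℝ) * poch a k * poch b (N-k) * (a + k) := by
      intro k hk
      rw [poch_succ]; ring
    rw [Finset.sum_congr rfl e3, Finset.sum_congr rfl e4]
    have e5 : ∀ k ∈ range (N+1),
        (N.choose k : ℝ) * poch a k * poch b (N-k) * (a + k)
          + (N.choose k : ℝ) * poch a k * poch b (N-k) * (b + (N-k:ℕ))
        = ((N.choose k : ℝ) * poch a k * poch b (N-k)) * (a + b + N) := by
      intro k hk
      simp only [mem_range] at hk
      have : ((N-k:ℕ):ℝ) = (N:ℝ) - k := by
        rw [Nat.cast_sub (by omega)]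
      rw [this]; ring
    rw [← Finset.sum_add_distrib, Finset.sum_congr rfl e5, ← Finset.sum_mul, ih, poch_succ]

lemma moment_lemma (a β : ℝ) (ha : -1 < a) (hβ : -1 < β) (N l j : ℕ)
    (w : ℕ → ℝ)
    (hw : ∀ k, w k =
      Real.Gamma (a + k + 1) * Real.Gamma (β + N - k + 1) /
        (Real.Gamma (a + 1) * Real.Gamma ((k : ℝ) + 1) * Real.Gamma (β + 1) *
          Real.Gamma ((N : ℝ) - k + 1))) :
    ∑ k ∈ range (N + 1), poch (β + N - k + 1) j * poch (k + a + 1) l * w k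
      = poch (a+1) l * poch (β+1) j * poch (a+β+2+j+l) N / (Nat.factorial N) := by
  have ha1 : (0:ℝ) < a + 1 := by linarith
  have hβ1 : (0:ℝ) < β + 1 := by linarith
  have key : ∀ k ∈ range (N+1), poch (β + N - k + 1) j * poch (k + a + 1) l * w k
      = poch (a+1) l * poch (β+1) j / (Nat.factorial N)
        * ((N.choose k : ℝ) * poch (a+1+l) k * poch (β+1+j) (N - k)) := by
    intro k hk
    simp only [mem_range] at hk
    have hkN : k ≤ N := by omega
    have hcast : ((N - k : ℕ) : ℝ) = (N:ℝ) - k := by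
      rw [Nat.cast_sub hkN]
    have hk0 : (0:ℝ) ≤ (k:ℝ) := Nat.cast_nonneg k
    have hl0 : (0:ℝ) ≤ (l:ℝ) := Nat.cast_nonneg l
    have hj0 : (0:ℝ) ≤ (j:ℝ) := Nat.cast_nonneg j
    have hak : (0:ℝ) < a + k + 1 := by linarith
    have hbk : (0:ℝ) < β + N - k + 1 := by
      have : (k:ℝ) ≤ N := by exact_mod_cast hkN
      linarith
    -- A side
    have t1 := Gamma_poch hak l
    have t2 := Gamma_poch ha1 l
    have t3 := Gamma_poch (a := a+1+l) (by linarith) k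
    have hA : poch (k + a + 1) l
        = Real.Gamma (a+1) * poch (a+1) l * poch (a+1+l) k / Real.Gamma (a + k + 1) := by
      rw [eq_div_iff (Real.Gamma_pos_of_pos hak).ne']
      have e0 : poch (↑k + a + 1) l = poch (a + ↑k + 1) l := by
        rw [show (↑k + a + 1 : ℝ) = a + ↑k + 1 by ring]
      rw [e0, mul_comm, ← t1, show (a + ↑k + 1 + ↑l : ℝ) = a+1+↑l+↑k by ring, t3, t2]
    -- B side
    have s1 := Gamma_poch hbk j
    have s2 := Gamma_poch hβ1 j
    have s3 := Gamma_poch (a := β+1+j) (by linarith) (N - k)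
    have hB : poch (β + N - k + 1) j
        = Real.Gamma (β+1) * poch (β+1) j * poch (β+1+j) (N-k)
            / Real.Gamma (β + N - k + 1) := by
      rw [eq_div_iff (Real.Gamma_pos_of_pos hbk).ne']
      rw [mul_comm, ← s1, show (β + ↑N - ↑k + 1 + ↑j : ℝ) = β+1+↑j+((N-k:ℕ):ℝ) by
        rw [hcast]; ring, s3, s2]
    have hfk : Real.Gamma ((k:ℝ) + 1) = (Nat.factorial k : ℝ) :=
      Real.Gamma_nat_eq_factorial k
    have hfNk : Real.Gamma ((N:ℝ) - (k:ℝ) + 1) = (Nat.factorial (N-k) : ℝ) := by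
      rw [← hcast]; exact Real.Gamma_nat_eq_factorial (N-k)
    rw [hw k, hA, hB, hfk, hfNk, Nat.cast_choose ℝ hkN]
    have g1 := (Real.Gamma_pos_of_pos hak).ne'
    have g2 := (Real.Gamma_pos_of_pos hbk).ne'
    have g3 := (Real.Gamma_pos_of_pos ha1).ne'
    have g4 := (Real.Gamma_pos_of_pos hβ1).ne'
    have f1 : (Nat.factorial k : ℝ) ≠ 0 := by positivity
    have f2 : (Nat.factorial (N-k) : ℝ) ≠ 0 := by positivity
    have f3 : (Nat.factorial N : ℝ) ≠ 0 := by positivity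
    field_simp
  rw [Finset.sum_congr rfl key, ← Finset.mul_sum, vandermonde_poch N (a+1+l) (β+1+j)]
  rw [show (a+1+(l:ℝ)+(β+1+(j:ℝ))) = a+β+2+(j:ℝ)+(l:ℝ) by ring]
  ring


set_option maxHeartbeats 2000000 in
/-- Evaluation of the discrete integral of the type I Hahn polynomial `Q^{(i)}`
against the Pochhammer basis `(β+N−k+1)_j` with the Hahn weight `w_i`. -/
theorem hahn_typeI_pochhammer_moments
    (p : ℕ) (hp : 0 < p) (n : Fin p → ℕ) (hn : ∀ i, 0 < n i)
    (S : ℕ) (hS : S = ∑ i, n i)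
    (α : Fin p → ℝ) (hα : ∀ i, -1 < α i)
    (hαint : ∀ i j, i ≠ j → ∀ z : ℤ, α i - α j ≠ (z : ℝ))
    (β : ℝ) (hβ : -1 < β) (N : ℕ) (hS2 : 2 ≤ S) (hSN : S ≤ N)
    (i : Fin p)
    (C : ℕ → ℝ)
    (hC : ∀ l, C l =
      (-1 : ℝ) ^ (S - 1) * (Nat.factorial (N + 1 - S) : ℝ) /
        ((Nat.factorial (n i - 1) : ℝ) * poch (β + 1) (S - 1) *
          poch (α i + β + S) (N + 2 - S)) *
      ((∏ k, poch (α k + β + S) (n k)) /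
        ∏ k ∈ univ.erase i, poch (α k - α i) (n k)) *
      (poch (-(n i : ℝ) + 1) l * poch (α i + β + S) l /
        ((Nat.factorial l : ℝ) * poch (α i + 1) l * poch (α i + β + N + 2) l)) *
      ∏ k ∈ univ.erase i, poch (α i - α k - n k + 1) l / poch (α i - α k + 1) l)
    (Q : ℝ → ℝ)
    (hQ : ∀ x, Q x = ∑ l ∈ range (n i), C l * poch (x + α i + 1) l)
    (w : ℕ → ℝ)
    (hw : ∀ k, w k =
      Real.Gamma (α i + k + 1) * Real.Gamma (β + N - k + 1) /
        (Real.Gamma (α i + 1) * Real.Gamma ((k : ℝ) + 1) * Real.Gamma (β + 1) *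
          Real.Gamma ((N : ℝ) - k + 1))) :
    ∀ j < S,
      ∑ k ∈ range (N + 1), poch (β + N - k + 1) j * Q k * w k =
        ((-1 : ℝ) ^ (S - 1) * (Nat.factorial (N + 1 - S) : ℝ) *
            (∏ m, poch (α m + β + S) (n m)) /
          ((Nat.factorial N : ℝ) * poch (β + 1 + j) (S - 1 - j))) *
        (Real.Gamma (α i + β + S) * poch (α i + β + N + 2) j /
          ((Nat.factorial (n i - 1) : ℝ) * Real.Gamma (α i + β + 2 + j) *
            ∏ m ∈ univ.erase i, poch (α m - α i) (n m))) *
        ∑ l ∈ range (n i),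
          poch (-(n i : ℝ) + 1) l * poch (α i + β + N + 2 + j) l *
              poch (α i + β + S) l *
              (∏ m ∈ univ.erase i, poch (α i + 1 - α m - n m) l) /
            ((Nat.factorial l : ℝ) * poch (α i + β + N + 2) l *
              poch (α i + β + 2 + j) l *
              ∏ m ∈ univ.erase i, poch (α i + 1 - α m) l) := by
  intro j hj
  have ha := hα i
  have hSr : (2:ℝ) ≤ (S:ℝ) := by exact_mod_cast hS2
  have hjr : (0:ℝ) ≤ (j:ℝ) := Nat.cast_nonneg j
  have hNr : (S:ℝ) ≤ (N:ℝ) := by exact_mod_cast hSN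
  -- Step 1: swap sums and apply the moment lemma
  have step1 : ∑ k ∈ range (N + 1), poch (β + N - k + 1) j * Q k * w k
      = ∑ l ∈ range (n i), C l *
          (poch (α i + 1) l * poch (β+1) j * poch (α i + β + 2 + j + l) N
            / (Nat.factorial N)) := by
    calc ∑ k ∈ range (N + 1), poch (β + N - k + 1) j * Q k * w k
        = ∑ k ∈ range (N + 1), ∑ l ∈ range (n i),
            C l * (poch (β + N - k + 1) j * poch (k + α i + 1) l * w k) := by
          refine Finset.sum_congr rfl fun k _ => ?_
          rw [hQ, Finset.mul_sum, Finset.sum_mul]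
          refine Finset.sum_congr rfl fun l _ => ?_
          ring
      _ = ∑ l ∈ range (n i), ∑ k ∈ range (N + 1),
            C l * (poch (β + N - k + 1) j * poch (k + α i + 1) l * w k) :=
          Finset.sum_comm
      _ = ∑ l ∈ range (n i), C l *
          (poch (α i + 1) l * poch (β+1) j * poch (α i + β + 2 + j + l) N
            / (Nat.factorial N)) := by
          refine Finset.sum_congr rfl fun l _ => ?_
          rw [← Finset.mul_sum, moment_lemma (α i) β ha hβ N l j w hw]
  rw [step1, Finset.mul_sum]
  refine Finset.sum_congr rfl fun l _ => ?_
  -- nonvanishing / positivity facts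
  have hab2 : (0:ℝ) < α i + β + 2 + j := by linarith
  have habS : (0:ℝ) < α i + β + S := by linarith
  have habN : (0:ℝ) < α i + β + N + 2 := by linarith
  have ha1 : (0:ℝ) < α i + 1 := by linarith
  have hβ1 : (0:ℝ) < β + 1 + j := by linarith
  have hDl := poch_pos hab2 l
  have hAl := poch_pos ha1 l
  have hBl := poch_pos habN l
  have hPA := poch_pos habS (N + 2 - S)
  have hPj2 := poch_pos hβ1 (S - 1 - j)
  have hG1 := Real.Gamma_pos_of_pos habS
  have hG2 := Real.Gamma_pos_of_pos hab2
  have hG3 := Real.Gamma_pos_of_pos habN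
  have hprodY : (∏ m ∈ univ.erase i, poch (α i + 1 - α m) l) ≠ 0 := by
    refine prod_ne_zero_iff.2 fun m hm => ?_
    have him : i ≠ m := (Finset.ne_of_mem_erase hm).symm
    refine poch_ne_zero_of_nonint (fun z hz => hαint i m him (z - 1) ?_) l
    push_cast
    linarith
  have hprodP1 : (∏ m ∈ univ.erase i, poch (α m - α i) (n m)) ≠ 0 := by
    refine prod_ne_zero_iff.2 fun m hm => ?_
    have him : m ≠ i := Finset.ne_of_mem_erase hm
    exact poch_ne_zero_of_nonint (hαint m i him) (n m)
  -- product-of-quotients rewrite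
  have hprod1 : (∏ k ∈ univ.erase i, poch (α i - α k - n k + 1) l / poch (α i - α k + 1) l)
      = (∏ m ∈ univ.erase i, poch (α i + 1 - α m - n m) l) /
          ∏ m ∈ univ.erase i, poch (α i + 1 - α m) l := by
    rw [Finset.prod_div_distrib]
    congr 1
    · exact Finset.prod_congr rfl fun m _ => by
        rw [show (α i - α m - (n m : ℝ) + 1) = α i + 1 - α m - n m by ring]
    · exact Finset.prod_congr rfl fun m _ => by
        rw [show (α i - α m + 1) = α i + 1 - α m by ring]
  -- Pochhammer / Gamma relations
  have R2 : poch (β + 1) (S - 1) = poch (β + 1) j * poch (β + 1 + j) (S - 1 - j) := by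
    have h := poch_add (β + 1) j (S - 1 - j)
    rw [show j + (S - 1 - j) = S - 1 by omega] at h
    exact h
  have E1 : poch (α i + β + 2 + j + l) N
      = poch (α i + β + 2 + j) N * poch (α i + β + N + 2 + j) l
          / poch (α i + β + 2 + j) l := by
    rw [eq_div_iff hDl.ne']
    have h1 := poch_add (α i + β + 2 + j) l N
    have h2 := poch_add (α i + β + 2 + j) N l
    rw [show l + N = N + l by omega] at h1
    rw [h2] at h1
    rw [show (α i + β + 2 + (j:ℝ) + (N:ℝ)) = α i + β + N + 2 + j by ring] at h1
    linarith [h1]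
  have E2 : poch (α i + β + 2 + j) N
      = Real.Gamma (α i + β + N + 2) * poch (α i + β + N + 2) j
          / Real.Gamma (α i + β + 2 + j) := by
    rw [eq_div_iff hG2.ne']
    have h1 := Gamma_poch hab2 N
    have h2 := Gamma_poch habN j
    rw [show (α i + β + 2 + (j:ℝ) + (N:ℝ)) = α i + β + (N:ℝ) + 2 + (j:ℝ) by ring] at h1
    rw [h2] at h1
    linarith [h1]
  have R3 : Real.Gamma (α i + β + N + 2)
      = Real.Gamma (α i + β + S) * poch (α i + β + S) (N + 2 - S) := by
    have h := Gamma_poch habS (N + 2 - S)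
    rw [show ((N + 2 - S : ℕ) : ℝ) = (N:ℝ) + 2 - S by
      rw [Nat.cast_sub (by omega)]; push_cast; ring] at h
    rw [show (α i + β + (S:ℝ) + ((N:ℝ) + 2 - (S:ℝ))) = α i + β + (N:ℝ) + 2 by ring] at h
    exact h
  have f1 : (Nat.factorial N : ℝ) ≠ 0 := by positivity
  have f2 : (Nat.factorial (n i - 1) : ℝ) ≠ 0 := by positivity
  have f3 : (Nat.factorial l : ℝ) ≠ 0 := by positivity
  rw [hC l, hprod1, R2, E1, E2, R3]
  set A1 := poch (α i + 1) l with hA1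
  set Bj := poch (β + 1) j with hBj
  set Bj2 := poch (β + 1 + (j:ℝ)) (S - 1 - j) with hBj2
  set PA := poch (α i + β + (S:ℝ)) (N + 2 - S) with hPAd
  set PP := ∏ k, poch (α k + β + (S:ℝ)) (n k) with hPP
  set P1 := ∏ k ∈ univ.erase i, poch (α k - α i) (n k) with hP1
  set U1 := poch (-(n i : ℝ) + 1) l with hU1
  set U2 := poch (α i + β + (S:ℝ)) l with hU2
  set Bl := poch (α i + β + (N:ℝ) + 2) l with hBld
  set Xl := ∏ m ∈ univ.erase i, poch (α i + 1 - α m - (n m : ℝ)) l with hXl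
  set Yl := ∏ m ∈ univ.erase i, poch (α i + 1 - α m) l with hYl
  set Dl := poch (α i + β + 2 + (j:ℝ)) l with hDld
  set El := poch (α i + β + (N:ℝ) + 2 + (j:ℝ)) l with hEl
  set Gj := poch (α i + β + (N:ℝ) + 2) j with hGj
  set G1 := Real.Gamma (α i + β + (S:ℝ)) with hG1d
  set G2 := Real.Gamma (α i + β + 2 + (j:ℝ)) with hG2d
  set K0 := (-1 : ℝ) ^ (S - 1) * (Nat.factorial (N + 1 - S) : ℝ) with hK0
  set F1 := (Nat.factorial (n i - 1) : ℝ) with hF1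
  set F2 := (Nat.factorial l : ℝ) with hF2
  set F3 := (Nat.factorial N : ℝ) with hF3
  have hDL : F1 * (Bj * Bj2) * PA * P1 * (F2 * A1 * Bl) * Yl * Dl * G2 * F3 ≠ 0 := by
    refine mul_ne_zero (mul_ne_zero (mul_ne_zero (mul_ne_zero (mul_ne_zero (mul_ne_zero
      (mul_ne_zero (mul_ne_zero f2 ?_) hPA.ne') hprodP1)
      (mul_ne_zero (mul_ne_zero f3 hAl.ne') hBl.ne')) hprodY) hDl.ne') hG2.ne') f1
    exact mul_ne_zero (poch_pos (by linarith) j).ne' hPj2.ne'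
  have hDR : F3 * Bj2 * (F1 * G2 * P1) * (F2 * Bl * Dl * Yl) ≠ 0 := by
    refine mul_ne_zero (mul_ne_zero (mul_ne_zero f1 hPj2.ne')
      (mul_ne_zero (mul_ne_zero f2 hG2.ne') hprodP1)) ?_
    exact mul_ne_zero (mul_ne_zero (mul_ne_zero f3 hBl.ne') hDl.ne') hprodY
  have hLeq : K0 / (F1 * (Bj * Bj2) * PA) * (PP / P1) * (U1 * U2 / (F2 * A1 * Bl)) *
        (Xl / Yl) * (A1 * Bj * (G1 * PA * Gj / G2 * El / Dl) / F3)
      = K0 * PP * U1 * U2 * Xl * A1 * Bj * G1 * PA * Gj * El /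
          (F1 * (Bj * Bj2) * PA * P1 * (F2 * A1 * Bl) * Yl * Dl * G2 * F3) := by
    ring
  have hReq : K0 * PP / (F3 * Bj2) * (G1 * Gj / (F1 * G2 * P1)) *
        (U1 * El * U2 * Xl / (F2 * Bl * Dl * Yl))
      = K0 * PP * G1 * Gj * U1 * El * U2 * Xl /
          (F3 * Bj2 * (F1 * G2 * P1) * (F2 * Bl * Dl * Yl)) := by
    ring
  calc K0 / (F1 * (Bj * Bj2) * PA) * (PP / P1) * (U1 * U2 / (F2 * A1 * Bl)) *
        (Xl / Yl) * (A1 * Bj * (G1 * PA * Gj / G2 * El / Dl) / F3)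
      = K0 * PP * U1 * U2 * Xl * A1 * Bj * G1 * PA * Gj * El /
          (F1 * (Bj * Bj2) * PA * P1 * (F2 * A1 * Bl) * Yl * Dl * G2 * F3) := hLeq
    _ = K0 * PP * G1 * Gj * U1 * El * U2 * Xl /
          (F3 * Bj2 * (F1 * G2 * P1) * (F2 * Bl * Dl * Yl)) := by
        rw [div_eq_div_iff hDL hDR]; ring
    _ = K0 * PP / (F3 * Bj2) * (G1 * Gj / (F1 * G2 * P1)) *
          (U1 * El * U2 * Xl / (F2 * Bl * Dl * Yl)) := hReq.symm
end

section
/- Let N ∈ ℕ, let f : {0,…,N} → ℂ be any function, and define (M_N f)(s) = ∑_{k=0}^N f(k) Γ(s+k)/k! for complex s. Let r be a real number with N/2 < r < N/2 + 1. Then for every x ∈ {0,…,N}: f(x) = (2πi)^{−1} ∮_{|s+N/2|=r} (M_N f)(s) · Γ(x+1)/Γ(x+s+1) ds. -/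
open Finset

section DiscreteMellinAux
open Metric

lemma aux_gamma_shift (z : ℂ) (n : ℕ) (h : ∀ i, i < n → z + i ≠ 0) :
    Complex.Gamma (z + n) = Complex.Gamma z * ∏ i ∈ range n, (z + i) := by
  induction n with
  | zero => simp
  | succ n ih =>
    have h1 : z + ((n : ℕ) + 1 : ℕ) = (z + n) + 1 := by push_cast; ring
    rw [h1, Complex.Gamma_add_one _ (h n n.lt_succ_self),
      ih (fun i hi => h i (hi.trans n.lt_succ_self)), prod_range_succ]
    ring

lemma aux_prod_range_eval (m n : ℕ) (h : m ≤ n) :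
    ∏ t ∈ (range (n+1)).erase m, ((t:ℂ) - m)
      = (-1)^m * m.factorial * (n-m).factorial := by
  have hsplit : (range (n+1)).erase m = range m ∪ Ico (m+1) (n+1) := by
    ext t; simp only [mem_erase, mem_range, mem_union, mem_Ico]; omega
  have hdisj : Disjoint (range m) (Ico (m+1) (n+1)) := by
    simp only [Finset.disjoint_left, mem_range, mem_Ico]; omega
  rw [hsplit, prod_union hdisj]
  have h1 : ∏ t ∈ range m, ((t:ℂ) - m) = (-1)^m * m.factorial := by
    have e1 : ∀ t ∈ range m, ((t:ℂ) - m) = -1 * ((m - t : ℕ) : ℂ) := by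
      intro t ht
      rw [mem_range] at ht
      rw [Nat.cast_sub ht.le]; ring
    rw [prod_congr rfl e1, prod_mul_distrib, prod_const, card_range, ← Nat.cast_prod,
      ← Nat.descFactorial_eq_prod_range, Nat.descFactorial_self]
  have h2 : ∏ t ∈ Ico (m+1) (n+1), ((t:ℂ) - m) = (n-m).factorial := by
    rw [prod_Ico_eq_prod_range]
    have e2 : ∀ j ∈ range (n+1-(m+1)), (((m+1+j : ℕ):ℂ) - m) = ((j+1 : ℕ) : ℂ) := by
      intro j _; push_cast; ring
    rw [prod_congr rfl e2, ← Nat.cast_prod]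
    congr 1
    have : n + 1 - (m + 1) = n - m := by omega
    rw [this]
    induction (n - m) with
    | zero => simp
    | succ p ih => rw [prod_range_succ, ih, Nat.factorial_succ]; ring
  rw [h1, h2]

lemma aux_residue_sum (n : ℕ) :
    ∑ m ∈ range (n+1), ∏ i ∈ (range (n+1)).erase m, ((i:ℂ) - m)⁻¹
      = if n = 0 then 1 else 0 := by
  have key : ∀ m ∈ range (n+1),
      ∏ i ∈ (range (n+1)).erase m, ((i:ℂ) - m)⁻¹
        = (-1)^m * ((m.factorial : ℂ))⁻¹ * (((n-m).factorial : ℂ))⁻¹ := by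
    intro m hm
    rw [mem_range] at hm
    rw [prod_inv_distrib, aux_prod_range_eval m n (by omega)]
    rw [mul_inv, mul_inv, ← inv_pow, inv_neg, inv_one]
  rw [sum_congr rfl key]
  have hn : (n.factorial : ℂ) ≠ 0 := Nat.cast_ne_zero.mpr n.factorial_ne_zero
  apply mul_left_cancel₀ hn
  rw [mul_sum]
  have term : ∀ m ∈ range (n+1),
      (n.factorial : ℂ) * ((-1)^m * ((m.factorial : ℂ))⁻¹ * (((n-m).factorial : ℂ))⁻¹)
        = (-1)^m * (n.choose m : ℂ) := by
    intro m hm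
    rw [mem_range] at hm
    have hc : (n.choose m * m.factorial * (n-m).factorial : ℕ) = n.factorial :=
      Nat.choose_mul_factorial_mul_factorial (by omega)
    have hm0 : ((m.factorial : ℂ)) ≠ 0 := Nat.cast_ne_zero.mpr m.factorial_ne_zero
    have hnm0 : (((n-m).factorial : ℂ)) ≠ 0 := Nat.cast_ne_zero.mpr (n-m).factorial_ne_zero
    field_simp
    rw [← hc]
    push_cast
    ring
  rw [sum_congr rfl term]
  have h := Int.alternating_sum_range_choose (n := n)
  have h2 := congrArg (fun z : ℤ => (z : ℂ)) h
  push_cast at h2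
  rw [h2]
  split_ifs with h0
  · subst h0; simp [Nat.factorial]
  · simp

lemma aux_residue_sum' (k x : ℕ) (h : k ≤ x) :
    ∑ j ∈ Icc k x, ∏ i ∈ (Icc k x).erase j, ((i:ℂ) - j)⁻¹
      = if k = x then 1 else 0 := by
  have hinj : Function.Injective (fun t : ℕ => k + t) := add_right_injective k
  have himg : Icc k x = (range (x - k + 1)).image (fun t => k + t) := by
    ext i; simp only [mem_Icc, mem_image, mem_range]
    constructor
    · rintro ⟨h1, h2⟩; exact ⟨i - k, by omega, by omega⟩
    · rintro ⟨t, ht, rfl⟩; omega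
  rw [himg, sum_image (fun a _ b _ hab => hinj hab)]
  have : ∀ m ∈ range (x - k + 1),
      ∏ i ∈ ((range (x-k+1)).image (fun t => k + t)).erase (k + m), ((i:ℂ) - ((k+m : ℕ) : ℂ))⁻¹
        = ∏ i ∈ (range (x-k+1)).erase m, ((i:ℂ) - m)⁻¹ := by
    intro m _
    rw [← Finset.image_erase hinj, prod_image (fun a _ b _ hab => hinj hab)]
    refine prod_congr rfl fun t _ => ?_
    push_cast; ring_nf
  rw [sum_congr rfl this, aux_residue_sum]
  congr 1
  simp only [eq_iff_iff]
  omega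

lemma aux_pf (T : Finset ℕ) (hT : T.Nonempty) (s : ℂ) (hs : ∀ j ∈ T, s + j ≠ 0) :
    ∏ j ∈ T, (s + (j:ℂ))⁻¹
      = ∑ j ∈ T, (∏ i ∈ T.erase j, ((i:ℂ) - j)⁻¹) * (s + j)⁻¹ := by
  have hinj : Set.InjOn (fun j : ℕ => -(j:ℂ)) T := fun a _ b _ hab => by
    have : ((a:ℂ)) = b := by linear_combination -hab
    exact_mod_cast this
  have h1 := Lagrange.sum_basis hinj hT
  have h2 := congrArg (Polynomial.eval s) h1
  rw [Polynomial.eval_finset_sum, Polynomial.eval_one] at h2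
  have h3 : ∀ j ∈ T, Polynomial.eval s (Lagrange.basis T (fun j : ℕ => -(j:ℂ)) j)
      = (∏ i ∈ T.erase j, ((i:ℂ) - j)⁻¹) * ∏ i ∈ T.erase j, (s + i) := by
    intro j _
    rw [Lagrange.basis, Polynomial.eval_prod, ← prod_mul_distrib]
    refine prod_congr rfl fun i _ => ?_
    rw [Lagrange.basisDivisor, Polynomial.eval_mul, Polynomial.eval_C,
      Polynomial.eval_sub, Polynomial.eval_X, Polynomial.eval_C]
    congr 1
    · congr 1; ring
    · ring
  rw [sum_congr rfl h3] at h2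
  -- multiply h2 by (∏ j ∈ T, (s+j))⁻¹
  have hP : ∀ j ∈ T, ∏ i ∈ T.erase j, (s + (i:ℂ)) = (∏ i ∈ T, (s + (i:ℂ))) * (s + j)⁻¹ := by
    intro j hj
    rw [← Finset.mul_prod_erase T _ hj, mul_comm (s + (j:ℂ)), mul_assoc,
      mul_inv_cancel₀ (hs j hj), mul_one]
  rw [sum_congr rfl (fun j hj => by rw [hP j hj])] at h2
  have hPne : (∏ i ∈ T, (s + (i:ℂ))) ≠ 0 := prod_ne_zero_iff.mpr hs
  have := congrArg (fun z => (∏ i ∈ T, (s + (i:ℂ)))⁻¹ * z) h2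
  simp only [mul_one] at this
  rw [mul_sum] at this
  rw [prod_inv_distrib, ← this]
  refine sum_congr rfl fun j hj => ?_
  field_simp

lemma aux_circleIntegral_sum {ι : Type*} (T : Finset ι) (F : ι → ℂ → ℂ) (c : ℂ) (R : ℝ)
    (h : ∀ i ∈ T, CircleIntegrable (F i) c R) :
    (∮ z in C(c, R), ∑ i ∈ T, F i z) = ∑ i ∈ T, ∮ z in C(c, R), F i z := by
  simp only [circleIntegral, smul_sum]
  exact intervalIntegral.integral_finset_sum (fun i hi => (h i hi).out)

lemma aux_sphere_ne (N : ℕ) (r : ℝ) (hr1 : (N : ℝ) / 2 < r) (hr2 : r < (N : ℝ) / 2 + 1)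
    (s : ℂ) (hs : s ∈ sphere (-(N : ℂ) / 2) r) (m : ℕ) : s ≠ -(m : ℂ) := by
  intro hsm
  rw [mem_sphere_iff_norm, hsm] at hs
  have : -(m : ℂ) - -(N : ℂ)/2 = (((N : ℝ)/2 - m : ℝ) : ℂ) := by push_cast; ring
  rw [this, Complex.norm_real, Real.norm_eq_abs] at hs
  rcases le_or_gt (m : ℝ) ((N : ℝ)) with hm | hm
  · have : |(N : ℝ)/2 - m| ≤ (N : ℝ)/2 := by
      rw [abs_le]
      constructor <;> [linarith; linarith [Nat.cast_nonneg (α := ℝ) m]]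
    linarith
  · have hm' : (N : ℝ) + 1 ≤ m := by exact_mod_cast Nat.succ_le_of_lt (by exact_mod_cast hm)
    have : (N : ℝ)/2 + 1 ≤ |(N : ℝ)/2 - m| := by
      rw [abs_sub_comm, abs_of_nonneg (by linarith)]
      linarith
    linarith

lemma aux_mem_ball (N : ℕ) (r : ℝ) (hr1 : (N : ℝ) / 2 < r) (j : ℕ) (hj : j ≤ N) :
    -(j : ℂ) ∈ ball (-(N : ℂ) / 2) r := by
  rw [mem_ball_iff_norm]
  have : -(j : ℂ) - -(N : ℂ)/2 = (((N : ℝ)/2 - j : ℝ) : ℂ) := by push_cast; ring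
  rw [this, Complex.norm_real, Real.norm_eq_abs]
  have hj' : (j : ℝ) ≤ N := by exact_mod_cast hj
  have : |(N : ℝ)/2 - j| ≤ (N : ℝ)/2 := by
    rw [abs_le]
    constructor <;> [linarith; linarith [Nat.cast_nonneg (α := ℝ) j]]
  linarith

/-- Inversion formula for the discrete analogue of the Mellin transform on the
lattice `{0,…,N}`: for `x ∈ {0,…,N}`,
`f x = (2πi)⁻¹ ∮ (M_N f)(s) Γ(x+1)/Γ(x+s+1) ds` over a circle centred at `−N/2`
of radius `r ∈ (N/2, N/2+1)`, which encloses `[−N,0]` once. -/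
theorem discrete_mellin_inversion
    (N : ℕ) (f : ℕ → ℂ) (r : ℝ)
    (hr1 : (N : ℝ) / 2 < r) (hr2 : r < (N : ℝ) / 2 + 1) :
    ∀ x : ℕ, x ≤ N →
      f x = (2 * Real.pi * Complex.I)⁻¹ *
        circleIntegral
          (fun s : ℂ =>
            (∑ k ∈ range (N + 1),
              f k * Complex.Gamma (s + k) / (Nat.factorial k : ℂ)) *
            Complex.Gamma ((x : ℂ) + 1) / Complex.Gamma ((x : ℂ) + s + 1))
          (-(N : ℂ) / 2) r := by
  intro x hx
  have hr0 : 0 < r := lt_of_le_of_lt (by positivity) hr1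
  set c : ℂ := -(N : ℂ) / 2 with hc
  set G : ℕ → ℂ → ℂ := fun k s =>
    (f k * Complex.Gamma ((x:ℂ)+1) / (k.factorial : ℂ)) *
      (if k ≤ x then
        ∑ j ∈ Icc k x, (∏ i ∈ (Icc k x).erase j, ((i:ℂ)-j)⁻¹) * (s + j)⁻¹
       else ∏ i ∈ Ico (x+1) k, (s + (i:ℂ))) with hG
  -- the integrand agrees with ∑ G k on the sphere
  have hEq : Set.EqOn
      (fun s : ℂ =>
        (∑ k ∈ range (N + 1),
          f k * Complex.Gamma (s + k) / (Nat.factorial k : ℂ)) *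
        Complex.Gamma ((x : ℂ) + 1) / Complex.Gamma ((x : ℂ) + s + 1))
      (fun s : ℂ => ∑ k ∈ range (N + 1), G k s) (sphere c r) := by
    intro s hs
    have hne : ∀ m : ℕ, s + (m:ℂ) ≠ 0 := by
      intro m h
      exact aux_sphere_ne N r hr1 hr2 s hs m (by linear_combination h)
    have hGne : ∀ m : ℕ, Complex.Gamma (s + (m:ℂ)) ≠ 0 := by
      intro m
      refine Complex.Gamma_ne_zero fun t => ?_
      intro h
      refine aux_sphere_ne N r hr1 hr2 s hs (m + t) ?_
      push_cast
      linear_combination h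
    have hGx : Complex.Gamma ((x:ℂ) + s + 1) ≠ 0 := by
      have h1 : (x:ℂ) + s + 1 = s + ((x+1 : ℕ) : ℂ) := by push_cast; ring
      rw [h1]; exact hGne (x+1)
    simp only [div_eq_mul_inv, sum_mul]
    refine sum_congr rfl fun k hk => ?_
    rw [mem_range] at hk
    simp only [hG]
    by_cases hkx : k ≤ x
    · rw [if_pos hkx]
      have key : Complex.Gamma ((x:ℂ) + s + 1)
          = Complex.Gamma (s + k) * ∏ i ∈ range (x+1-k), (s + k + i) := by
        have h1 : (x:ℂ) + s + 1 = (s + k) + ((x+1-k : ℕ) : ℂ) := by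
          rw [Nat.cast_sub (by omega)]
          push_cast; ring
        rw [h1]
        exact aux_gamma_shift (s + k) (x+1-k) fun i _ => by
          have : s + (k:ℂ) + i = s + ((k+i : ℕ) : ℂ) := by push_cast; ring
          rw [this]; exact hne (k+i)
      have hprod : ∏ i ∈ range (x+1-k), (s + (k:ℂ) + i) = ∏ j ∈ Icc k x, (s + (j:ℂ)) := by
        rw [← Finset.Ico_add_one_right_eq_Icc, prod_Ico_eq_prod_range]
        exact prod_congr rfl fun i _ => by push_cast; ring
      have hprodne : ∏ j ∈ Icc k x, (s + (j:ℂ)) ≠ 0 :=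
        prod_ne_zero_iff.mpr fun j _ => hne j
      have hquot : Complex.Gamma (s + k) * (Complex.Gamma ((x:ℂ) + s + 1))⁻¹
          = ∏ j ∈ Icc k x, (s + (j:ℂ))⁻¹ := by
        rw [key, hprod, prod_inv_distrib, mul_inv, ← mul_assoc,
          mul_inv_cancel₀ (hGne k), one_mul]
      rw [← aux_pf (Icc k x) (by simp [Nat.lt_succ_iff]; omega) s (fun j _ => hne j), ← hquot]
      ring
    · rw [if_neg hkx]
      push_neg at hkx
      have key : Complex.Gamma (s + k)
          = Complex.Gamma ((x:ℂ) + s + 1) * ∏ i ∈ Ico (x+1) k, (s + (i:ℂ)) := by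
        have h1 : s + (k:ℂ) = ((x:ℂ) + s + 1) + ((k - (x+1) : ℕ) : ℂ) := by
          rw [Nat.cast_sub (by omega)]
          push_cast; ring
        have h2 := aux_gamma_shift ((x:ℂ) + s + 1) (k - (x+1)) fun i _ => by
          have : (x:ℂ) + s + 1 + i = s + ((x+1+i : ℕ) : ℂ) := by push_cast; ring
          rw [this]; exact hne (x+1+i)
        rw [h1, h2, prod_Ico_eq_prod_range]
        congr 1
        exact (prod_congr rfl fun i _ => by push_cast; ring).symm
      rw [key]
      linear_combination (f k * ((k.factorial : ℂ))⁻¹ * Complex.Gamma ((x:ℂ)+1) *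
        ∏ i ∈ Ico (x+1) k, (s + (i:ℂ))) * mul_inv_cancel₀ hGx
  rw [circleIntegral.integral_congr hr0.le hEq]
  -- integrability
  have hcont : ∀ k ∈ range (N+1), CircleIntegrable (G k) c r := by
    intro k _
    refine ContinuousOn.circleIntegrable hr0.le ?_
    refine ContinuousOn.mul continuousOn_const ?_
    by_cases hkx : k ≤ x
    · simp only [hG, if_pos hkx]
      refine continuousOn_finset_sum _ fun j _ => ContinuousOn.mul continuousOn_const ?_
      refine ContinuousOn.inv₀ ((continuous_id.add continuous_const).continuousOn) fun s hs h => ?_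
      exact aux_sphere_ne N r hr1 hr2 s hs j (by linear_combination h)
    · simp only [hG, if_neg hkx]
      exact (continuous_finset_prod _ fun i _ => continuous_id.add continuous_const).continuousOn
  rw [aux_circleIntegral_sum _ _ _ _ hcont]
  -- compute each integral
  have hval : ∀ k ∈ range (N+1),
      (∮ z in C(c, r), G k z)
        = if k = x then f x * Complex.Gamma ((x:ℂ)+1) / (x.factorial : ℂ)
            * (2 * Real.pi * Complex.I) else 0 := by
    intro k hk
    rw [mem_range] at hk
    by_cases hkx : k ≤ x
    · have : G k = fun s => (f k * Complex.Gamma ((x:ℂ)+1) / (k.factorial : ℂ)) *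
          ∑ j ∈ Icc k x, (∏ i ∈ (Icc k x).erase j, ((i:ℂ)-(j:ℂ))⁻¹) * (s + (j:ℂ))⁻¹ := by
        funext s; simp only [hG, if_pos hkx]
      rw [this, circleIntegral.integral_const_mul]
      have hint : ∀ j ∈ Icc k x,
          CircleIntegrable (fun s => (∏ i ∈ (Icc k x).erase j, ((i:ℂ)-j)⁻¹) * (s + j)⁻¹) c r := by
        intro j _
        refine ContinuousOn.circleIntegrable hr0.le ?_
        refine ContinuousOn.mul continuousOn_const ?_
        refine ContinuousOn.inv₀ ((continuous_id.add continuous_const).continuousOn) fun s hs h => ?_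
        exact aux_sphere_ne N r hr1 hr2 s hs j (by linear_combination h)
      rw [aux_circleIntegral_sum _ _ _ _ hint]
      have hjval : ∀ j ∈ Icc k x,
          (∮ z in C(c, r), (∏ i ∈ (Icc k x).erase j, ((i:ℂ)-j)⁻¹) * (z + j)⁻¹)
            = (∏ i ∈ (Icc k x).erase j, ((i:ℂ)-j)⁻¹) * (2 * Real.pi * Complex.I) := by
        intro j hj
        rw [mem_Icc] at hj
        rw [circleIntegral.integral_const_mul]
        congr 1
        have : (fun z : ℂ => (z + (j:ℂ))⁻¹) = fun z : ℂ => (z - (-(j:ℂ)))⁻¹ := by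
          funext z; ring_nf
        rw [this]
        exact circleIntegral.integral_sub_inv_of_mem_ball (aux_mem_ball N r hr1 j (by omega))
      rw [sum_congr rfl hjval, ← sum_mul, aux_residue_sum' k x hkx]
      by_cases h : k = x
      · subst h; simp
      · simp [h]
    · push_neg at hkx
      have : G k = fun s => (f k * Complex.Gamma ((x:ℂ)+1) / (k.factorial : ℂ)) *
          ∏ i ∈ Ico (x+1) k, (s + (i:ℂ)) := by
        funext s; simp only [hG, if_neg (not_le.mpr hkx)]
      rw [this, circleIntegral.integral_const_mul]
      rw [if_neg (by omega)]
      have hzero : (∮ z in C(c, r), ∏ i ∈ Ico (x+1) k, (z + (i:ℂ))) = 0 := by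
        refine Complex.circleIntegral_eq_zero_of_differentiable_on_off_countable hr0.le
          Set.countable_empty ((continuous_finset_prod _ fun i _ => continuous_id.add continuous_const).continuousOn) fun z _ => ?_
        exact DifferentiableAt.fun_finsetProd fun i _ =>
          (differentiableAt_id.add_const _)
      rw [hzero, mul_zero]
  rw [sum_congr rfl hval, sum_ite_eq' (range (N+1)) x, if_pos (mem_range.mpr (by omega))]
  rw [Complex.Gamma_nat_eq_factorial]
  have hfact : ((x.factorial : ℂ)) ≠ 0 := Nat.cast_ne_zero.mpr x.factorial_ne_zero
  have h2pi : (2 * (Real.pi : ℂ) * Complex.I) ≠ 0 := by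
    simp [Real.pi_ne_zero, Complex.I_ne_zero]
  field_simp

end DiscreteMellinAux
end

section
/- Let c ∈ ℝ and r > 0 be such that |α_i + k − c| < r for every i ∈ {1,…,p} and k ∈ {0,…,n_i−1}, and let φ : ℂ → ℂ be analytic on the closed disc {t : |t−c| ≤ r} with φ(α_i+k) ≠ 0 for all such i, k. Given complex polynomials A_1,…,A_p with deg A_i ≤ n_i − 1, there exists a unique complex polynomial q with deg q ≤ |n⃗| − 1 such that for every real x > 0: ∑_{i=1}^p A_i(x) x^{α_i} = (2πi)^{−1} ∮_{|t−c|=r} q(t) φ(t) x^t / ∏_{i=1}^p (α_i − t)_{n_i} dt, where x^t = exp(t·log x). -/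
open Finset Metric

/-- The Pochhammer symbol (rising factorial) `(a)_m` for a complex number `a`. -/
noncomputable def pochC (a : ℂ) (m : ℕ) : ℂ := (ascPochhammer ℂ m).eval a

lemma pochC_eq_prod (a : ℂ) (m : ℕ) : pochC a m = ∏ j ∈ Finset.range m, (a + j) := by
  induction m with
  | zero => simp [pochC]
  | succ m ih =>
      rw [pochC, ascPochhammer_succ_right, Polynomial.eval_mul, Finset.prod_range_succ, ← ih]
      simp [pochC]

lemma circleIntegral_finset_sum {ι : Type*} (s : Finset ι) (f : ι → ℂ → ℂ) (c : ℂ) (R : ℝ)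
    (h : ∀ i ∈ s, CircleIntegrable (f i) c R) :
    circleIntegral (fun z => ∑ i ∈ s, f i z) c R = ∑ i ∈ s, circleIntegral (f i) c R := by
  unfold circleIntegral
  rw [← intervalIntegral.integral_finset_sum (fun i hi => (h i hi).out)]
  refine intervalIntegral.integral_congr fun θ _ => ?_
  simp [Finset.mul_sum]

lemma partial_fraction {ι : Type*} [Fintype ι] [DecidableEq ι] [Nonempty ι] (ρ : ι → ℂ)
    (hinj : Function.Injective ρ) (t : ℂ) (ht : ∀ m, ρ m ≠ t) :
    (∏ m, (ρ m - t))⁻¹ =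
      ∑ m, (∏ m' ∈ Finset.univ.erase m, (ρ m' - ρ m)⁻¹) * (ρ m - t)⁻¹ := by
  have hone : ∑ m, Polynomial.eval t (Lagrange.basis Finset.univ ρ m) = 1 := by
    rw [← Polynomial.eval_finset_sum,
      Lagrange.sum_basis hinj.injOn Finset.univ_nonempty, Polynomial.eval_one]
  have hbasis : ∀ m, Polynomial.eval t (Lagrange.basis Finset.univ ρ m)
      = ∏ m' ∈ Finset.univ.erase m, ((ρ m' - ρ m)⁻¹ * (ρ m' - t)) := by
    intro m
    rw [Lagrange.basis, Polynomial.eval_prod]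
    refine Finset.prod_congr rfl fun m' _ => ?_
    simp only [Lagrange.basisDivisor, Polynomial.eval_mul, Polynomial.eval_C,
      Polynomial.eval_sub, Polynomial.eval_X]
    rw [show ρ m - ρ m' = -(ρ m' - ρ m) by ring, show t - ρ m' = -(ρ m' - t) by ring]
    rw [inv_neg]; ring
  have hP : ∀ m, ρ m - t ≠ 0 := fun m => sub_ne_zero.mpr (ht m)
  have hPne : (∏ m, (ρ m - t)) ≠ 0 := Finset.prod_ne_zero_iff.mpr fun m _ => hP m
  calc (∏ m, (ρ m - t))⁻¹
      = (∑ m, Polynomial.eval t (Lagrange.basis Finset.univ ρ m)) * (∏ m, (ρ m - t))⁻¹ := by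
        rw [hone, one_mul]
    _ = ∑ m, (∏ m' ∈ Finset.univ.erase m, (ρ m' - ρ m)⁻¹) * (ρ m - t)⁻¹ := by
        rw [Finset.sum_mul]
        refine Finset.sum_congr rfl fun m _ => ?_
        rw [hbasis m, Finset.prod_mul_distrib]
        have h1 : (∏ m, (ρ m - t)) = (ρ m - t) * ∏ m' ∈ Finset.univ.erase m, (ρ m' - t) :=
          (Finset.mul_prod_erase _ _ (Finset.mem_univ m)).symm
        have h2 : (∏ m' ∈ Finset.univ.erase m, (ρ m' - t)) ≠ 0 :=
          Finset.prod_ne_zero_iff.mpr fun m' _ => hP m'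
        rw [h1, mul_inv, mul_comm ((ρ m - t)⁻¹), mul_assoc,
          ← mul_assoc (∏ m' ∈ Finset.univ.erase m, (ρ m' - t)),
          mul_inv_cancel₀ h2, one_mul]

lemma contour_sum_residues {ι : Type*} [Fintype ι] [DecidableEq ι] [Nonempty ι]
    (c : ℂ) (r : ℝ) (hr : 0 < r) (ρ : ι → ℂ) (hρ : ∀ m, ρ m ∈ Metric.ball c r)
    (hinj : Function.Injective ρ) (f : ℂ → ℂ)
    (hf : DiffContOnCl ℂ f (Metric.ball c r)) :
    (2 * Real.pi * Complex.I)⁻¹ *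
      circleIntegral (fun t => f t / ∏ m, (ρ m - t)) c r
      = ∑ m, (-(∏ m' ∈ Finset.univ.erase m, (ρ m' - ρ m)⁻¹)) * f (ρ m) := by
  have hfc : ContinuousOn f (Metric.sphere c r) := by
    have := hf.continuousOn
    rw [closure_ball c hr.ne'] at this
    exact this.mono Metric.sphere_subset_closedBall
  have hts : ∀ t ∈ Metric.sphere c r, ∀ m, ρ m ≠ t := by
    intro t ht m he
    have h1 : dist (ρ m) c < r := Metric.mem_ball.mp (hρ m)
    have h2 : dist t c = r := Metric.mem_sphere.mp ht
    rw [he, h2] at h1; exact lt_irrefl _ h1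
  have heq : Set.EqOn (fun t => f t / ∏ m, (ρ m - t))
      (fun t => ∑ m, (-(∏ m' ∈ Finset.univ.erase m, (ρ m' - ρ m)⁻¹)) * ((t - ρ m)⁻¹ * f t))
      (Metric.sphere c r) := by
    intro t ht
    simp only
    rw [div_eq_mul_inv, partial_fraction ρ hinj t (hts t ht), Finset.mul_sum]
    refine Finset.sum_congr rfl fun m _ => ?_
    rw [show t - ρ m = -(ρ m - t) by ring, inv_neg]
    ring
  rw [circleIntegral.integral_congr hr.le heq]
  have hint : ∀ m : ι, CircleIntegrable
      (fun t => (-(∏ m' ∈ Finset.univ.erase m, (ρ m' - ρ m)⁻¹)) * ((t - ρ m)⁻¹ * f t)) c r := by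
    intro m
    refine ContinuousOn.circleIntegrable hr.le ?_
    refine (continuousOn_const.mul (ContinuousOn.mul ?_ hfc))
    exact ContinuousOn.inv₀ (continuousOn_id.sub continuousOn_const)
      fun t ht => sub_ne_zero.mpr fun he => hts t ht m he.symm
  rw [circleIntegral_finset_sum Finset.univ _ c r (fun m _ => hint m), Finset.mul_sum]
  refine Finset.sum_congr rfl fun m _ => ?_
  rw [circleIntegral.integral_const_mul]
  have hcauchy : circleIntegral (fun t => (t - ρ m)⁻¹ * f t) c r
      = (2 * Real.pi * Complex.I) * f (ρ m) := by
    have := hf.circleIntegral_sub_inv_smul (hρ m)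
    simpa [smul_eq_mul] using this
  rw [hcauchy]
  have hne : (2 * (Real.pi : ℂ) * Complex.I) ≠ 0 := by
    simp [Real.pi_ne_zero, Complex.I_ne_zero, Complex.ofReal_ne_zero]
  rw [show (2 * Real.pi * Complex.I)⁻¹ *
      ((-(∏ m' ∈ Finset.univ.erase m, (ρ m' - ρ m)⁻¹)) * ((2 * Real.pi * Complex.I) * f (ρ m)))
      = ((2 * Real.pi * Complex.I)⁻¹ * (2 * Real.pi * Complex.I)) *
        ((-(∏ m' ∈ Finset.univ.erase m, (ρ m' - ρ m)⁻¹)) * f (ρ m)) by push_cast; ring,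
    inv_mul_cancel₀ (by push_cast at hne ⊢; exact hne), one_mul]

lemma powfun_linIndep {ι : Type*} [Fintype ι] (ρ : ι → ℝ) (hinj : Function.Injective ρ)
    (b : ι → ℂ) (h : ∀ y : ℝ, ∑ m, b m * Complex.exp (ρ m * y) = 0) : ∀ m, b m = 0 := by
  set χ : ι → (Multiplicative ℝ →* ℂ) := fun m =>
    { toFun := fun y => Complex.exp (ρ m * (Multiplicative.toAdd y))
      map_one' := by simp
      map_mul' := fun y z => by
        simp [toAdd_mul, mul_add, Complex.exp_add] } with hχdef
  have hχ : Function.Injective χ := by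
    intro m m' hmm
    have h1 : Complex.exp ((ρ m : ℂ) * ((1:ℝ) : ℂ)) = Complex.exp ((ρ m' : ℂ) * ((1:ℝ) : ℂ)) := by
      have := congrArg (fun g : Multiplicative ℝ →* ℂ => g (Multiplicative.ofAdd (1:ℝ))) hmm
      simpa [hχdef] using this
    apply hinj
    have h2 : ((Real.exp (ρ m) : ℝ) : ℂ) = ((Real.exp (ρ m') : ℝ) : ℂ) := by
      rw [Complex.ofReal_exp, Complex.ofReal_exp]
      simpa using h1
    exact Real.exp_injective (by exact_mod_cast h2)
  have li : LinearIndependent ℂ (fun m => ⇑(χ m)) :=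
    (linearIndependent_monoidHom (Multiplicative ℝ) ℂ).comp χ hχ
  refine Fintype.linearIndependent_iff.mp li b ?_
  funext y
  have := h (Multiplicative.toAdd y)
  simpa [hχdef, Finset.sum_apply] using this

/-- Any type I linear form `∑ A_i(x) x^{α_i}` has a unique contour-integral
representation `(2πi)⁻¹ ∮ q(t) φ(t) x^t / ∏ (α_i − t)_{n_i} dt` with `deg q ≤ |n|−1`. -/
theorem typeI_contour_representation
    (p : ℕ) (hp : 0 < p) (n : Fin p → ℕ) (hn : ∀ i, 0 < n i)
    (S : ℕ) (hS : S = ∑ i, n i)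
    (α : Fin p → ℝ) (hα : ∀ i, -1 < α i)
    (hαint : ∀ i j, i ≠ j → ∀ z : ℤ, α i - α j ≠ (z : ℝ))
    (c r : ℝ) (hr : 0 < r)
    (henc : ∀ i, ∀ k < n i, |α i + k - c| < r)
    (φ : ℂ → ℂ)
    (hφ : AnalyticOnNhd ℂ φ (Metric.closedBall (c : ℂ) r))
    (hφne : ∀ i, ∀ k < n i, φ ((α i : ℂ) + k) ≠ 0)
    (A : Fin p → Polynomial ℂ) (hA : ∀ i, (A i).natDegree ≤ n i - 1) :
    ∃! q : Polynomial ℂ, q.natDegree ≤ S - 1 ∧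
      ∀ x : ℝ, 0 < x →
        ∑ i, (A i).eval (x : ℂ) * ((x ^ α i : ℝ) : ℂ) =
          (2 * Real.pi * Complex.I)⁻¹ *
            circleIntegral
              (fun t : ℂ => q.eval t * φ t * Complex.exp (t * Real.log x) /
                ∏ i, pochC ((α i : ℂ) - t) (n i))
              (c : ℂ) r := by
  classical
  haveI : Nonempty ((i : Fin p) × Fin (n i)) := ⟨⟨⟨0, hp⟩, ⟨0, hn _⟩⟩⟩
  set ρr : ((i : Fin p) × Fin (n i)) → ℝ := fun m => α m.1 + m.2 with hρrdef
  set ρ : ((i : Fin p) × Fin (n i)) → ℂ := fun m => ((ρr m : ℝ) : ℂ) with hρdef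
  have hinjr : Function.Injective ρr := by
    rintro ⟨i, k⟩ ⟨j, l⟩ h
    simp only [hρrdef] at h
    by_cases hij : i = j
    · subst hij
      have hkl : (k : ℕ) = (l : ℕ) := by
        have : ((k : ℕ) : ℝ) = ((l : ℕ) : ℝ) := by
          simpa using h
        exact_mod_cast this
      have : k = l := Fin.ext hkl
      rw [this]
    · exact absurd (show α i - α j = (((l : ℤ) - (k : ℤ) : ℤ) : ℝ) by push_cast; linarith)
        (hαint i j hij _)
  have hinj : Function.Injective ρ := fun a b h => hinjr (Complex.ofReal_inj.mp h)
  have hball : ∀ m, ρ m ∈ Metric.ball (c : ℂ) r := by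
    intro m
    rw [Metric.mem_ball, Complex.dist_eq]
    have h1 : ρ m - (c : ℂ) = ((ρr m - c : ℝ) : ℂ) := by push_cast [hρdef]; ring
    rw [h1, Complex.norm_real, Real.norm_eq_abs]
    exact henc m.1 m.2 m.2.isLt
  have hprod : ∀ t : ℂ, (∏ i, pochC ((α i : ℂ) - t) (n i)) = ∏ m, (ρ m - t) := by
    intro t
    rw [← Finset.univ_sigma_univ, Finset.prod_sigma]
    refine Finset.prod_congr rfl fun i _ => ?_
    rw [pochC_eq_prod, ← Fin.prod_univ_eq_prod_range (fun j => ((α i : ℂ) - t + j))]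
    refine Finset.prod_congr rfl fun k _ => ?_
    simp only [hρdef, hρrdef]
    push_cast
    ring
  set w : ((i : Fin p) × Fin (n i)) → ℂ :=
    fun m => ∏ m' ∈ Finset.univ.erase m, (ρ m' - ρ m)⁻¹ with hwdef
  set Cc : ((i : Fin p) × Fin (n i)) → ℂ := fun m => (-(w m)) * φ (ρ m) with hCcdef
  have hρφ : ∀ m, φ (ρ m) ≠ 0 := by
    intro m
    have h1 := hφne m.1 m.2 m.2.isLt
    have h2 : ρ m = (α m.1 : ℂ) + (m.2 : ℕ) := by push_cast [hρdef, hρrdef]; ring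
    rw [h2]; exact h1
  have hw : ∀ m, w m ≠ 0 := fun m => Finset.prod_ne_zero_iff.mpr fun m' hm' =>
    inv_ne_zero (sub_ne_zero.mpr fun he => (Finset.mem_erase.mp hm').1 (hinj he))
  have hCc : ∀ m, Cc m ≠ 0 := fun m => mul_ne_zero (neg_ne_zero.mpr (hw m)) (hρφ m)
  have hRHS : ∀ (q : Polynomial ℂ) (x : ℝ), 0 < x →
      (2 * Real.pi * Complex.I)⁻¹ * circleIntegral
        (fun t : ℂ => q.eval t * φ t * Complex.exp (t * Real.log x) /
          ∏ i, pochC ((α i : ℂ) - t) (n i)) (c : ℂ) r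
      = ∑ m, Cc m * q.eval (ρ m) * Complex.exp (ρ m * (Real.log x : ℂ)) := by
    intro q x hx
    have hfd : DiffContOnCl ℂ (fun t => q.eval t * φ t * Complex.exp (t * (Real.log x : ℂ)))
        (Metric.ball (c : ℂ) r) := by
      apply DifferentiableOn.diffContOnCl
      rw [closure_ball (c : ℂ) hr.ne']
      refine ((q.differentiable.differentiableOn.mul hφ.differentiableOn).mul ?_)
      exact (Complex.differentiable_exp.comp
        (differentiable_id.mul_const _)).differentiableOn
    have hres := contour_sum_residues (c : ℂ) r hr ρ hball hinj _ hfd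
    have hfun : (fun t : ℂ => q.eval t * φ t * Complex.exp (t * Real.log x) /
          ∏ i, pochC ((α i : ℂ) - t) (n i))
        = fun t => (q.eval t * φ t * Complex.exp (t * (Real.log x : ℂ))) /
            ∏ m, (ρ m - t) := by
      funext t; rw [hprod t]
    rw [hfun, hres]
    refine Finset.sum_congr rfl fun m _ => ?_
    simp only [hCcdef]; ring
  have hLHS : ∀ x : ℝ, 0 < x →
      (∑ i, (A i).eval (x : ℂ) * ((x ^ α i : ℝ) : ℂ))
      = ∑ m, (A m.1).coeff m.2 * Complex.exp (ρ m * (Real.log x : ℂ)) := by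
    intro x hx
    rw [← Finset.univ_sigma_univ, Finset.sum_sigma]
    refine Finset.sum_congr rfl fun i _ => ?_
    have hxc : ((x : ℂ)) = Complex.exp ((Real.log x : ℝ) : ℂ) := by
      rw [← Complex.ofReal_exp, Real.exp_log hx]
    have hpow : ((x ^ α i : ℝ) : ℂ) = Complex.exp ((α i : ℂ) * (Real.log x : ℂ)) := by
      rw [Real.rpow_def_of_pos hx, Complex.ofReal_exp]
      congr 1
      push_cast
      ring
    have hdeg : (A i).natDegree < n i := lt_of_le_of_lt (hA i) (Nat.sub_lt (hn i) one_pos)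
    rw [Polynomial.eval_eq_sum_range' hdeg, Finset.sum_mul,
      ← Fin.sum_univ_eq_sum_range (fun k => (A i).coeff k * (x : ℂ) ^ k *
        ((x ^ α i : ℝ) : ℂ)) (n i)]
    refine Finset.sum_congr rfl fun k _ => ?_
    have hxk : (x : ℂ) ^ (k : ℕ) = Complex.exp (((k : ℕ) : ℂ) * (Real.log x : ℂ)) := by
      rw [Complex.exp_nat_mul, ← hxc]
    rw [hpow, hxk, mul_assoc, ← Complex.exp_add]
    congr 2
    · push_cast [hρdef, hρrdef]; ring
  set tv : ((i : Fin p) × Fin (n i)) → ℂ := fun m => (A m.1).coeff m.2 / Cc m with hvdef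
  have hCv : ∀ m, Cc m * tv m = (A m.1).coeff m.2 := by
    intro m; rw [hvdef]; rw [mul_comm]; exact div_mul_cancel₀ _ (hCc m)
  have hkey : ∀ q : Polynomial ℂ,
      (∀ x : ℝ, 0 < x →
        ∑ i, (A i).eval (x : ℂ) * ((x ^ α i : ℝ) : ℂ) =
          (2 * Real.pi * Complex.I)⁻¹ *
            circleIntegral
              (fun t : ℂ => q.eval t * φ t * Complex.exp (t * Real.log x) /
                ∏ i, pochC ((α i : ℂ) - t) (n i))
              (c : ℂ) r)
      ↔ ∀ m, q.eval (ρ m) = tv m := by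
    intro q
    constructor
    · intro h m
      have hz : ∀ m, ((A m.1).coeff m.2 - Cc m * q.eval (ρ m)) = 0 := by
        apply powfun_linIndep ρr hinjr
        intro y
        have hx : (0 : ℝ) < Real.exp y := Real.exp_pos y
        have h1 := h (Real.exp y) hx
        rw [hLHS _ hx, hRHS q _ hx] at h1
        have h2 : (Real.log (Real.exp y) : ℂ) = (y : ℂ) := by rw [Real.log_exp]
        rw [h2] at h1
        have h3 : ∀ m : ((i : Fin p) × Fin (n i)),
            ((A m.1).coeff m.2 - Cc m * q.eval (ρ m)) * Complex.exp ((ρr m : ℂ) * (y : ℂ))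
            = (A m.1).coeff m.2 * Complex.exp (ρ m * (y : ℂ))
              - Cc m * q.eval (ρ m) * Complex.exp (ρ m * (y : ℂ)) := by
          intro m; rw [hρdef]; ring
        rw [Finset.sum_congr rfl fun m _ => h3 m, Finset.sum_sub_distrib, h1, sub_self]
      have := hz m
      have h4 : (A m.1).coeff m.2 = Cc m * q.eval (ρ m) := by linear_combination this
      rw [hvdef]
      simp only
      rw [h4]
      exact (mul_div_cancel_left₀ _ (hCc m)).symm
    · intro hq x hx
      rw [hLHS x hx, hRHS q x hx]
      refine Finset.sum_congr rfl fun m _ => ?_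
      rw [hq m]
      rw [show Cc m * tv m * Complex.exp (ρ m * (Real.log x : ℂ))
        = (Cc m * tv m) * Complex.exp (ρ m * (Real.log x : ℂ)) by ring, hCv m]
  haveI : Nonempty (Fin p) := ⟨⟨0, hp⟩⟩
  have hS1 : 1 ≤ S := by
    rw [hS]
    exact Finset.sum_pos (fun i _ => hn i) Finset.univ_nonempty
  have hcard : (Finset.univ : Finset ((i : Fin p) × Fin (n i))).card = S := by
    rw [hS, Finset.card_univ, Fintype.card_sigma]
    simp
  set q0 : Polynomial ℂ := Lagrange.interpolate Finset.univ ρ tv with hq0def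
  have hq0eval : ∀ m, q0.eval (ρ m) = tv m := fun m =>
    Lagrange.eval_interpolate_at_node (r := tv) hinj.injOn (Finset.mem_univ m)
  have hdegle : ∀ q : Polynomial ℂ, q.degree < (S : WithBot ℕ) → q.natDegree ≤ S - 1 := by
    intro q hq
    rcases eq_or_ne q 0 with h0 | h0
    · simp [h0]
    · rw [Polynomial.degree_eq_natDegree h0] at hq
      have : q.natDegree < S := by exact_mod_cast hq
      omega
  have hdeglt : ∀ q : Polynomial ℂ, q.natDegree ≤ S - 1 → q.degree < (S : WithBot ℕ) := by
    intro q hq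
    refine lt_of_le_of_lt q.degree_le_natDegree ?_
    exact_mod_cast Nat.lt_of_le_of_lt hq (by omega)
  refine ⟨q0, ⟨?_, (hkey q0).mpr hq0eval⟩, ?_⟩
  · apply hdegle
    have := Lagrange.degree_interpolate_lt (s := Finset.univ) (r := tv) hinj.injOn
    rwa [hcard] at this
  · rintro q' ⟨hd', hp'⟩
    have hev : ∀ m, q'.eval (ρ m) = tv m := (hkey q').mp hp'
    have h1 : q' = Lagrange.interpolate Finset.univ ρ (fun m => q'.eval (ρ m)) :=
      Lagrange.eq_interpolate hinj.injOn (by rw [hcard]; exact hdeglt q' hd')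
    rw [h1, show (fun m => q'.eval (ρ m)) = tv from funext hev, hq0def]
end

section
/- For i ∈ {1,…,p} define the polynomial L^{(i)}(x) = [(−1)^{|n⃗|−1} / ((n_i−1)! · ∏_{k≠i}(α_k−α_i)_{n_k} · Γ(α_i+1))] · ∑_{l=0}^{n_i−1} [(−n_i+1)_l ∏_{k≠i}(α_i+1−α_k−n_k)_l] / [(α_i+1)_l ∏_{k≠i}(α_i+1−α_k)_l] · x^l/l!. Then ∑_{i=1}^p ∫_0^∞ x^j L^{(i)}(x) x^{α_i} e^{−x} dx = 0 for every j ∈ {0,…,|n⃗|−2}, and = 1 for j = |n⃗|−1. -/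
open Finset MeasureTheory

namespace LagAux

open Polynomial

lemma poch_zero (a : ℝ) : poch a 0 = 1 := by simp [poch]

lemma poch_succ (a : ℝ) (m : ℕ) : poch a (m+1) = poch a m * (a + m) := by
  simp [poch, ascPochhammer_succ_right]

lemma poch_eq_prod (a : ℝ) (m : ℕ) : poch a m = ∏ j ∈ range m, (a + j) := by
  induction m with
  | zero => simp [poch]
  | succ m ih =>
    rw [poch, ascPochhammer_succ_right, Polynomial.eval_mul, ← poch, ih, prod_range_succ]
    simp

lemma poch_add (a : ℝ) (m l : ℕ) : poch a (m + l) = poch a m * poch (a + m) l := by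
  have := ascPochhammer_mul (S := ℝ) m l
  have h2 := congrArg (Polynomial.eval a) this
  simpa [poch, Polynomial.eval_comp] using h2.symm

lemma poch_pos {a : ℝ} (ha : 0 < a) (m : ℕ) : 0 < poch a m := by
  rw [poch_eq_prod]
  exact prod_pos fun j _ => by positivity

lemma poch_ne_zero {a : ℝ} {m : ℕ} (h : ∀ j < m, a + j ≠ 0) : poch a m ≠ 0 := by
  rw [poch_eq_prod]
  exact prod_ne_zero_iff.2 fun j hj => h j (mem_range.1 hj)

lemma poch_reflect (d : ℝ) (N : ℕ) : poch (d + 1 - N) N = (-1)^N * poch (-d) N := by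
  rw [poch_eq_prod, poch_eq_prod, ← prod_range_reflect]
  have : (-1 : ℝ)^N * ∏ j ∈ range N, (-d + j) = ∏ j ∈ range N, (-1) * (-d + j) := by
    rw [prod_mul_distrib, prod_const, card_range]
  rw [this]
  refine prod_congr rfl fun j hj => ?_
  have hj' := mem_range.1 hj
  have h2 : ((N - 1 - j : ℕ) : ℝ) = (N : ℝ) - 1 - j := by
    rw [Nat.cast_sub (by omega : j ≤ N - 1), Nat.cast_sub (by omega : 1 ≤ N)]
    norm_num
  rw [h2]; ring

lemma Gamma_poch {a : ℝ} (ha : 0 < a) (m : ℕ) :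
    Real.Gamma (a + m) = poch a m * Real.Gamma a := by
  induction m with
  | zero => simp [poch_zero]
  | succ m ih =>
    have : a + (m + 1 : ℕ) = (a + m) + 1 := by push_cast; ring
    rw [this, Real.Gamma_add_one (by positivity), ih, poch_succ]; ring

lemma key_k (d : ℝ) (N m : ℕ) :
    poch (d + 1 - N) m * ∏ m' ∈ range N, (d + m - m')
      = (-1)^N * poch (-d) N * poch (d + 1) m := by
  have h1 : ∏ m' ∈ range N, (d + m - m') = poch (d + m + 1 - N) N := by
    rw [poch_eq_prod, ← prod_range_reflect]
    refine prod_congr rfl fun j hj => ?_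
    have hj' := mem_range.1 hj
    rw [Nat.cast_sub (by omega : j ≤ N - 1), Nat.cast_sub (by omega : 1 ≤ N)]
    norm_num; ring
  have h2 : poch (d + 1 - N) (m + N) = poch (d + 1 - N) m * poch (d + m + 1 - N) N := by
    rw [poch_add]; ring_nf
  have h3 : poch (d + 1 - N) (N + m) = poch (d + 1 - N) N * poch (d + 1) m := by
    rw [poch_add]; ring_nf
  rw [h1, ← h2, Nat.add_comm m N, h3, poch_reflect]

lemma fact_prod (m : ℕ) : ∏ j ∈ range m, ((j : ℝ) + 1) = (m.factorial : ℝ) := by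
  induction m with
  | zero => simp
  | succ m ih => rw [prod_range_succ, ih, Nat.factorial_succ]; push_cast; ring

lemma pochNeg (K : ℕ) : ∀ m ≤ K, poch (-(K:ℝ)) m * ((K - m).factorial : ℝ)
    = (-1)^m * (K.factorial : ℝ) := by
  intro m
  induction m with
  | zero => intro _; simp [poch_zero]
  | succ m ih =>
    intro hm
    have hm' : m ≤ K := by omega
    have h1 : -(K:ℝ) + m = -((K - m : ℕ) : ℝ) := by
      rw [Nat.cast_sub hm']; ring
    have h2 : ((K - m).factorial : ℝ) = ((K - m : ℕ) : ℝ) * ((K - (m+1)).factorial : ℝ) := by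
      have : K - m = (K - (m+1)) + 1 := by omega
      rw [this, Nat.factorial_succ]; push_cast [Nat.cast_sub (by omega : m+1 ≤ K)]; ring
    have := ih hm'
    rw [h2] at this
    rw [poch_succ, h1]
    calc poch (-(K:ℝ)) m * -((K - m : ℕ) : ℝ) * ((K - (m+1)).factorial : ℝ)
        = -(poch (-(K:ℝ)) m * (((K - m : ℕ) : ℝ) * ((K - (m+1)).factorial : ℝ))) := by ring
      _ = -((-1)^m * (K.factorial : ℝ)) := by rw [← this]
      _ = (-1)^(m+1) * (K.factorial : ℝ) := by ring

lemma erase_range_split {N m : ℕ} (hm : m < N) (f : ℕ → ℝ) :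
    ∏ m' ∈ (range N).erase m, f m' = (∏ m' ∈ range m, f m') * ∏ m' ∈ Ico (m+1) N, f m' := by
  rw [← prod_union]
  · refine prod_congr ?_ fun _ _ => rfl
    ext x
    simp only [mem_erase, mem_range, mem_union, mem_Ico]
    omega
  · rw [disjoint_left]; intro x h1 h2
    simp only [mem_range] at h1
    simp only [mem_Ico] at h2
    omega

lemma key_i {N m : ℕ} (hm : m < N) :
    poch (-(N:ℝ) + 1) m * ∏ m' ∈ (range N).erase m, ((m:ℝ) - (m':ℝ))
      = (-1)^(N-1) * ((N-1).factorial : ℝ) * (m.factorial : ℝ) := by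
  have h0 : -(N:ℝ) + 1 = -(((N-1 : ℕ)) : ℝ) := by
    rw [Nat.cast_sub (by omega : 1 ≤ N)]; push_cast; ring
  have hp := pochNeg (N-1) m (by omega)
  have h1 : ∏ m' ∈ range m, ((m:ℝ) - (m':ℝ)) = (m.factorial : ℝ) := by
    rw [← prod_range_reflect, ← fact_prod m]
    refine prod_congr rfl fun j hj => ?_
    have hj' := mem_range.1 hj
    rw [Nat.cast_sub (by omega : j ≤ m - 1), Nat.cast_sub (by omega : 1 ≤ m)]
    norm_num; ring
  have h2 : ∏ m' ∈ Ico (m+1) N, ((m:ℝ) - (m':ℝ))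
      = (-1)^(N-1-m) * (((N-1-m).factorial : ℝ)) := by
    rw [prod_Ico_eq_prod_range]
    have hc : N - (m+1) = N - 1 - m := by omega
    have hcc : (-1:ℝ)^(N-1-m) * ∏ j ∈ range (N-1-m), ((j:ℝ)+1)
        = ∏ j ∈ range (N-1-m), ((-1) * ((j:ℝ)+1)) := by
      rw [prod_mul_distrib, prod_const, card_range]
    rw [hc, ← fact_prod (N-1-m), hcc]
    refine prod_congr rfl fun j hj => ?_
    push_cast; ring
  rw [erase_range_split hm, h1, h2, h0]
  have h3 : N - 1 - m = (N-1) - m := rfl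
  calc poch (-((N-1:ℕ):ℝ)) m * ((m.factorial:ℝ) * ((-1)^(N-1-m) * ((N-1-m).factorial : ℝ)))
      = (poch (-((N-1:ℕ):ℝ)) m * (((N-1) - m).factorial : ℝ)) * (m.factorial:ℝ) * (-1)^(N-1-m) := by
        rw [h3]; ring
    _ = (-1)^m * ((N-1).factorial : ℝ) * (m.factorial:ℝ) * (-1)^(N-1-m) := by rw [hp]
    _ = (-1)^(m + (N-1-m)) * ((N-1).factorial : ℝ) * (m.factorial:ℝ) := by rw [pow_add]; ring
    _ = (-1)^(N-1) * ((N-1).factorial : ℝ) * (m.factorial : ℝ) := by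
        rw [show m + (N-1-m) = N-1 by omega]

lemma prod_sigma_erase {p : ℕ} {n : Fin p → ℕ} (f : (Σ i : Fin p, Fin (n i)) → ℝ)
    (i : Fin p) (m : Fin (n i)) :
    ∏ τ ∈ univ.erase ⟨i, m⟩, f τ
      = (∏ m' ∈ univ.erase m, f ⟨i, m'⟩) * ∏ k ∈ univ.erase i, ∏ m', f ⟨k, m'⟩ := by
  classical
  have h1 : ∏ τ ∈ univ.erase ⟨i, m⟩, f τ
      = ∏ τ : (Σ i : Fin p, Fin (n i)), (if τ = ⟨i, m⟩ then 1 else f τ) :=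
    calc ∏ τ ∈ univ.erase ⟨i, m⟩, f τ
        = ∏ τ ∈ univ.erase ⟨i, m⟩, (if τ = ⟨i, m⟩ then 1 else f τ) :=
          prod_congr rfl fun τ hτ => (if_neg (mem_erase.1 hτ).1).symm
      _ = _ := Finset.prod_erase _ (if_pos rfl)
  rw [h1, ← Finset.univ_sigma_univ, Finset.prod_sigma]
  rw [← Finset.mul_prod_erase univ _ (mem_univ i)]
  congr 1
  · calc ∏ m' : Fin (n i), (if (⟨i, m'⟩ : Σ i, Fin (n i)) = ⟨i, m⟩ then 1 else f ⟨i, m'⟩)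
        = ∏ m' : Fin (n i), (if m' = m then 1 else f ⟨i, m'⟩) := by
          refine prod_congr rfl fun m' _ => ?_
          congr 1
          simp
      _ = ∏ m' ∈ univ.erase m, (if m' = m then 1 else f ⟨i, m'⟩) :=
          (Finset.prod_erase univ (f := fun m' => if m' = m then 1 else f ⟨i, m'⟩)
            (by simp)).symm
      _ = ∏ m' ∈ univ.erase m, f ⟨i, m'⟩ :=
          prod_congr rfl fun m' hm' => if_neg (mem_erase.1 hm').1
  · refine prod_congr rfl fun k hk => prod_congr rfl fun m' _ => ?_
    exact if_neg fun h => (mem_erase.1 hk).1 (by injection h)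

lemma lagrange_coeff {ι : Type*} [Fintype ι] [DecidableEq ι] (v : ι → ℝ)
    (hv : Function.Injective v) (P : ℝ[X]) (S : ℕ) (hcard : Fintype.card ι = S)
    (hP : P.degree < S) :
    ∑ σ, P.eval (v σ) * (∏ τ ∈ univ.erase σ, (v σ - v τ))⁻¹ = P.coeff (S - 1) := by
  classical
  have hcard' : (univ : Finset ι).card = S := by rw [card_univ, hcard]
  have hint := (Lagrange.eq_interpolate (s := (univ : Finset ι)) (v := v)
    (Set.injOn_of_injective hv) (f := P) (by rw [hcard']; exact hP)).symm
  have hco := congrArg (fun q => Polynomial.coeff q (S - 1)) hint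
  simp only [Lagrange.interpolate_apply] at hco
  rw [← hco, finset_sum_coeff]
  refine Finset.sum_congr rfl fun σ _ => ?_
  rw [coeff_C_mul]
  congr 1
  have hdeg : (Lagrange.basis univ v σ).degree = ((univ : Finset ι).card - 1 : ℕ) :=
    Lagrange.degree_basis (Set.injOn_of_injective hv) (mem_univ σ)
  have hnd : (Lagrange.basis univ v σ).natDegree = S - 1 := by
    rw [natDegree_eq_of_degree_eq_some hdeg, hcard']
  rw [← hnd, ← leadingCoeff, Lagrange.basis, leadingCoeff_prod, ← Finset.prod_inv_distrib]
  refine prod_congr rfl fun τ hτ => ?_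
  rw [Lagrange.basisDivisor, leadingCoeff_mul, leadingCoeff_C, leadingCoeff_X_sub_C, mul_one]

lemma fin_erase_prod {N : ℕ} (m : Fin N) (F : ℕ → ℝ) :
    ∏ m' ∈ univ.erase m, F (m' : ℕ) = ∏ m' ∈ (range N).erase (m : ℕ), F m' := by
  have h0 : ((m : ℕ)) = Fin.valEmbedding m := rfl
  rw [← Nat.Iio_eq_range, ← Fin.map_valEmbedding_univ, h0, ← Finset.map_erase, Finset.prod_map]
  rfl

lemma P_eval (j : ℕ) (t : ℝ) : ((ascPochhammer ℝ j).comp (X + C 1)).eval t = poch (t + 1) j := by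
  rw [eval_comp]; simp [poch]

lemma P_natDegree (j : ℕ) : ((ascPochhammer ℝ j).comp (X + C 1)).natDegree = j := by
  rw [natDegree_comp, ascPochhammer_natDegree, natDegree_X_add_C, mul_one]

lemma P_monic (j : ℕ) : ((ascPochhammer ℝ j).comp (X + C 1)).Monic :=
  (monic_ascPochhammer ℝ j).comp_X_add_C 1

lemma P_degree_lt {j S : ℕ} (hj : j < S) :
    ((ascPochhammer ℝ j).comp (X + C 1)).degree < (S : ℕ) := by
  rw [← natDegree_lt_iff_degree_lt (P_monic j).ne_zero, P_natDegree]
  exact hj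

lemma integral_eval (αi : ℝ) (hαi : -1 < αi) (Cf : ℝ) (a : ℕ → ℝ) (N j : ℕ) :
    (∫ x in Set.Ioi (0:ℝ),
      x^j * (Cf * ∑ l ∈ range N, a l * x^l / (l.factorial:ℝ)) * x^αi * Real.exp (-x))
    = ∑ l ∈ range N, Cf * a l / (l.factorial:ℝ) * Real.Gamma (αi + j + l + 1) := by
  have hpos : ∀ l : ℕ, (0:ℝ) < αi + j + l + 1 := fun l => by
    have : (0:ℝ) ≤ (j:ℝ) + l := by positivity
    linarith
  have h1 : ∀ x ∈ Set.Ioi (0:ℝ),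
      x^j * (Cf * ∑ l ∈ range N, a l * x^l / (l.factorial:ℝ)) * x^αi * Real.exp (-x)
      = ∑ l ∈ range N, Cf * a l / (l.factorial:ℝ)
          * (Real.exp (-x) * x ^ ((αi + j + l + 1) - 1)) := by
    intro x hx
    have hx' : (0:ℝ) < x := hx
    rw [Finset.mul_sum, Finset.mul_sum, Finset.sum_mul, Finset.sum_mul]
    refine Finset.sum_congr rfl fun l _ => ?_
    have he : αi + j + l + 1 - 1 = αi + ((j + l : ℕ) : ℝ) := by push_cast; ring
    rw [he, Real.rpow_add hx', Real.rpow_natCast, pow_add]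
    ring
  rw [setIntegral_congr_fun measurableSet_Ioi h1]
  rw [integral_finset_sum _ (fun l _ =>
    (Real.GammaIntegral_convergent (hpos l)).const_mul _)]
  refine Finset.sum_congr rfl fun l _ => ?_
  rw [MeasureTheory.integral_const_mul, ← Real.Gamma_eq_integral (hpos l)]

lemma combine {F Pk G Aa Ab Ba Bb Mf Di Dks pochJ s1 s2 Gfull : ℝ}
    (hF : F ≠ 0) (hPk : Pk ≠ 0) (hG : G ≠ 0) (hBa : Ba ≠ 0) (hBb : Bb ≠ 0)
    (hMf : Mf ≠ 0) (hDi : Di ≠ 0) (hDks : Dks ≠ 0)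
    (h1 : Aa * Di = s1 * F * Mf) (h2 : Ab * Dks = s2 * Pk * Bb)
    (hs1 : s1 * s1 = 1) (hs2 : s2 * s2 = 1)
    (hΓ : Gfull = Ba * pochJ * G) :
    (s1 * s2) / (F * Pk * G) * ((Aa * Ab) / (Ba * Bb)) / Mf * Gfull
      = pochJ * (Di * Dks)⁻¹ := by
  have hAa : Aa = s1 * F * Mf / Di := by rw [eq_div_iff hDi]; exact h1
  have hAb : Ab = s2 * Pk * Bb / Dks := by rw [eq_div_iff hDks]; exact h2
  subst hΓ hAa hAb
  field_simp
  linear_combination (s2 * s2 * pochJ) * hs1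
    + (pochJ) * hs2

lemma sq_neg_one (a : ℕ) : ((-1:ℝ)^a) * (-1)^a = 1 := by
  rw [← pow_add]; exact Even.neg_one_pow ⟨a, rfl⟩

end LagAux

/-- The explicit hypergeometric polynomials `L^{(i)}` satisfy the type I orthogonality
conditions for the multiple Laguerre polynomials of the first kind. -/
theorem laguerreI_typeI_orthogonality
    (p : ℕ) (hp : 0 < p) (n : Fin p → ℕ) (hn : ∀ i, 0 < n i)
    (S : ℕ) (hS : S = ∑ i, n i)
    (α : Fin p → ℝ) (hα : ∀ i, -1 < α i)
    (hαint : ∀ i j, i ≠ j → ∀ z : ℤ, α i - α j ≠ (z : ℝ))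
    (L : Fin p → ℝ → ℝ)
    (hL : ∀ i x, L i x =
      ((-1 : ℝ) ^ (S - 1) /
        ((Nat.factorial (n i - 1) : ℝ) *
          (∏ k ∈ univ.erase i, poch (α k - α i) (n k)) *
          Real.Gamma (α i + 1))) *
      ∑ l ∈ range (n i),
        (poch (-(n i : ℝ) + 1) l * ∏ k ∈ univ.erase i, poch (α i + 1 - α k - n k) l) /
            (poch (α i + 1) l * ∏ k ∈ univ.erase i, poch (α i + 1 - α k) l) *
          x ^ l / (Nat.factorial l : ℝ)) :
    (∀ j < S - 1,
      ∑ i, ∫ x in Set.Ioi (0 : ℝ),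
        x ^ j * L i x * x ^ α i * Real.exp (-x) = 0) ∧
    ∑ i, ∫ x in Set.Ioi (0 : ℝ),
      x ^ (S - 1) * L i x * x ^ α i * Real.exp (-x) = 1 := by
  classical
  have hS1 : 1 ≤ S := by
    obtain ⟨i0⟩ := Fin.pos_iff_nonempty.1 hp
    calc 1 ≤ n i0 := hn i0
      _ ≤ ∑ i, n i := Finset.single_le_sum (fun _ _ => Nat.zero_le _) (mem_univ i0)
      _ = S := hS.symm
  have hne : ∀ i k, i ≠ k → ∀ z : ℤ, α i - α k + (z:ℝ) ≠ 0 := by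
    intro i k hik z h
    exact hαint i k hik (-z) (by push_cast; linarith)
  have hvinj : Function.Injective
      (fun σ : (Σ i : Fin p, Fin (n i)) => α σ.1 + ((σ.2 : ℕ) : ℝ)) := by
    rintro ⟨i, m⟩ ⟨k, m'⟩ h
    simp only at h
    rcases eq_or_ne i k with rfl | hik
    · have h2 : ((m : ℕ) : ℝ) = ((m' : ℕ) : ℝ) := by linarith
      have h3 : (m : ℕ) = (m' : ℕ) := by exact_mod_cast h2
      exact congrArg (Sigma.mk i) (Fin.ext h3)
    · exfalso
      exact hne i k hik (((m : ℕ) : ℤ) - ((m' : ℕ) : ℤ)) (by push_cast; linarith)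
  have hcard : Fintype.card (Σ i : Fin p, Fin (n i)) = S := by
    simp [Fintype.card_sigma, hS]
  have key : ∀ j : ℕ, j < S →
      (∑ i, ∫ x in Set.Ioi (0:ℝ), x ^ j * L i x * x ^ α i * Real.exp (-x))
        = ((ascPochhammer ℝ j).comp (Polynomial.X + Polynomial.C 1)).coeff (S - 1) := by
    intro j hj
    have step1 : ∀ i, (∫ x in Set.Ioi (0:ℝ), x ^ j * L i x * x ^ α i * Real.exp (-x))
        = ∑ l ∈ range (n i),
            ((-1 : ℝ) ^ (S - 1) /
              ((Nat.factorial (n i - 1) : ℝ) *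
                (∏ k ∈ univ.erase i, poch (α k - α i) (n k)) *
                Real.Gamma (α i + 1)))
            * ((poch (-(n i : ℝ) + 1) l * ∏ k ∈ univ.erase i, poch (α i + 1 - α k - n k) l) /
                (poch (α i + 1) l * ∏ k ∈ univ.erase i, poch (α i + 1 - α k) l))
            / (Nat.factorial l : ℝ) * Real.Gamma (α i + j + l + 1) := by
      intro i
      simp only [hL]
      exact LagAux.integral_eval (α i) (hα i) _ _ (n i) j
    calc (∑ i, ∫ x in Set.Ioi (0:ℝ), x ^ j * L i x * x ^ α i * Real.exp (-x))
        = ∑ i, ∑ l ∈ range (n i),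
            ((-1 : ℝ) ^ (S - 1) /
              ((Nat.factorial (n i - 1) : ℝ) *
                (∏ k ∈ univ.erase i, poch (α k - α i) (n k)) *
                Real.Gamma (α i + 1)))
            * ((poch (-(n i : ℝ) + 1) l * ∏ k ∈ univ.erase i, poch (α i + 1 - α k - n k) l) /
                (poch (α i + 1) l * ∏ k ∈ univ.erase i, poch (α i + 1 - α k) l))
            / (Nat.factorial l : ℝ) * Real.Gamma (α i + j + l + 1) :=
          Finset.sum_congr rfl fun i _ => step1 i
      _ = ∑ σ : (Σ i : Fin p, Fin (n i)),
            ((ascPochhammer ℝ j).comp (Polynomial.X + Polynomial.C 1)).eval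
              (α σ.1 + ((σ.2 : ℕ) : ℝ)) *
            (∏ τ ∈ univ.erase σ,
              ((α σ.1 + ((σ.2 : ℕ) : ℝ)) - (α τ.1 + ((τ.2 : ℕ) : ℝ))))⁻¹ := ?_
      _ = ((ascPochhammer ℝ j).comp (Polynomial.X + Polynomial.C 1)).coeff (S - 1) :=
          LagAux.lagrange_coeff _ hvinj _ S hcard (LagAux.P_degree_lt hj)
    have hsig : ∀ f : (Σ i : Fin p, Fin (n i)) → ℝ,
        (∑ σ : (Σ i : Fin p, Fin (n i)), f σ) = ∑ i, ∑ m : Fin (n i), f ⟨i, m⟩ := fun f => by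
      rw [← Finset.univ_sigma_univ, Finset.sum_sigma]
    refine Eq.trans ?_ (hsig _).symm
    refine Finset.sum_congr rfl fun i _ => ?_
    rw [← Fin.sum_univ_eq_sum_range]
    refine Finset.sum_congr rfl fun m _ => ?_
    dsimp only
    -- nonvanishing facts
    have hαi1 : (0:ℝ) < α i + 1 := by linarith [hα i]
    have hG : Real.Gamma (α i + 1) ≠ 0 := (Real.Gamma_pos_of_pos hαi1).ne'
    have hF : ((n i - 1).factorial : ℝ) ≠ 0 := Nat.cast_ne_zero.2 (Nat.factorial_ne_zero _)
    have hMf : (((m : ℕ)).factorial : ℝ) ≠ 0 := Nat.cast_ne_zero.2 (Nat.factorial_ne_zero _)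
    have hBa : poch (α i + 1) (m : ℕ) ≠ 0 := (LagAux.poch_pos hαi1 _).ne'
    have hPk : (∏ k ∈ univ.erase i, poch (α k - α i) (n k)) ≠ 0 := by
      refine prod_ne_zero_iff.2 fun k hk => LagAux.poch_ne_zero fun t ht h => ?_
      exact hne k i (mem_erase.1 hk).1 ((t : ℕ) : ℤ) (by push_cast at h ⊢; linarith)
    have hBb : (∏ k ∈ univ.erase i, poch (α i + 1 - α k) (m : ℕ)) ≠ 0 := by
      refine prod_ne_zero_iff.2 fun k hk => LagAux.poch_ne_zero fun t ht h => ?_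
      exact hne i k (Ne.symm (mem_erase.1 hk).1) (1 + (t : ℤ)) (by push_cast at h ⊢; linarith)
    have hDi : (∏ m' ∈ univ.erase m, (((m : ℕ) : ℝ) - ((m' : ℕ) : ℝ))) ≠ 0 := by
      refine prod_ne_zero_iff.2 fun m' hm' => sub_ne_zero.2 fun h => ?_
      exact (mem_erase.1 hm').1 (Fin.ext (by exact_mod_cast h.symm))
    have hDks : (∏ k ∈ univ.erase i, ∏ m' : Fin (n k),
        (α i + ((m : ℕ) : ℝ) - (α k + ((m' : ℕ) : ℝ)))) ≠ 0 := by
      refine prod_ne_zero_iff.2 fun k hk => prod_ne_zero_iff.2 fun m' _ => fun h => ?_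
      exact hne i k (Ne.symm (mem_erase.1 hk).1) (((m : ℕ) : ℤ) - ((m' : ℕ) : ℤ))
        (by push_cast; linarith)
    -- structure of the denominator
    rw [LagAux.prod_sigma_erase
      (fun τ : (Σ i : Fin p, Fin (n i)) =>
        (α i + ((m : ℕ) : ℝ)) - (α τ.1 + ((τ.2 : ℕ) : ℝ))) i m]
    have hDi_eq : (∏ m' ∈ univ.erase m,
          ((α i + ((m : ℕ) : ℝ)) - (α i + ((m' : ℕ) : ℝ))))
        = ∏ m' ∈ univ.erase m, (((m : ℕ) : ℝ) - ((m' : ℕ) : ℝ)) :=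
      Finset.prod_congr rfl fun m' _ => by ring
    have hDks_eq : (∏ k ∈ univ.erase i, ∏ m' : Fin (n k),
          ((α i + ((m : ℕ) : ℝ)) - (α k + ((m' : ℕ) : ℝ))))
        = ∏ k ∈ univ.erase i, ∏ m' : Fin (n k),
            (α i + ((m : ℕ) : ℝ) - (α k + ((m' : ℕ) : ℝ))) :=
      Finset.prod_congr rfl fun k _ => Finset.prod_congr rfl fun m' _ => by ring
    rw [hDi_eq, hDks_eq, LagAux.P_eval]
    -- sign
    have hsum := Finset.add_sum_erase univ n (mem_univ i)
    have hni := hn i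
    have hsign : (-1:ℝ)^(S-1) = (-1)^(n i - 1) * (-1)^(∑ k ∈ univ.erase i, n k) := by
      rw [← pow_add]
      congr 1
      omega
    rw [hsign]
    -- identities
    have h1 : poch (-(n i : ℝ) + 1) (m : ℕ)
        * ∏ m' ∈ univ.erase m, (((m : ℕ) : ℝ) - ((m' : ℕ) : ℝ))
        = (-1)^(n i - 1) * ((n i - 1).factorial : ℝ) * (((m : ℕ)).factorial : ℝ) := by
      rw [LagAux.fin_erase_prod m (fun q => ((m : ℕ) : ℝ) - (q : ℝ))]
      exact LagAux.key_i m.isLt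
    have h2 : (∏ k ∈ univ.erase i, poch (α i + 1 - α k - n k) (m : ℕ))
        * (∏ k ∈ univ.erase i, ∏ m' : Fin (n k),
            (α i + ((m : ℕ) : ℝ) - (α k + ((m' : ℕ) : ℝ))))
        = (-1)^(∑ k ∈ univ.erase i, n k)
          * (∏ k ∈ univ.erase i, poch (α k - α i) (n k))
          * (∏ k ∈ univ.erase i, poch (α i + 1 - α k) (m : ℕ)) := by
      rw [← Finset.prod_mul_distrib, ← Finset.prod_pow_eq_pow_sum,
        ← Finset.prod_mul_distrib, ← Finset.prod_mul_distrib]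
      refine Finset.prod_congr rfl fun k hk => ?_
      have hinner : (∏ m' : Fin (n k), (α i + ((m : ℕ) : ℝ) - (α k + ((m' : ℕ) : ℝ))))
          = ∏ m' ∈ range (n k), (α i - α k + ((m : ℕ) : ℝ) - (m' : ℝ)) := by
        rw [← Fin.prod_univ_eq_prod_range (fun q => α i - α k + ((m : ℕ) : ℝ) - (q : ℝ))]
        exact Finset.prod_congr rfl fun m' _ => by ring
      rw [show α i + 1 - α k - (n k : ℝ) = α i - α k + 1 - (n k : ℝ) by ring, hinner,
        LagAux.key_k (α i - α k) (n k) (m : ℕ),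
        show -(α i - α k) = α k - α i by ring,
        show α i - α k + 1 = α i + 1 - α k by ring]
    have hGamma : Real.Gamma (α i + (j : ℝ) + ((m : ℕ) : ℝ) + 1)
        = poch (α i + 1) (m : ℕ) * poch (α i + ((m : ℕ) : ℝ) + 1) j
          * Real.Gamma (α i + 1) := by
      have e1 : α i + (j : ℝ) + ((m : ℕ) : ℝ) + 1
          = (α i + 1) + ((((m : ℕ) + j : ℕ)) : ℝ) := by push_cast; ring
      rw [e1, LagAux.Gamma_poch hαi1, LagAux.poch_add,
        show α i + 1 + ((m : ℕ) : ℝ) = α i + ((m : ℕ) : ℝ) + 1 by ring]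
    exact LagAux.combine hF hPk hG hBa hBb hMf hDi hDks h1 h2
      (LagAux.sq_neg_one _) (LagAux.sq_neg_one _) hGamma
  refine ⟨fun j hj => ?_, ?_⟩
  · rw [key j (by omega)]
    exact Polynomial.coeff_eq_zero_of_natDegree_lt (by rw [LagAux.P_natDegree]; omega)
  · rw [key (S-1) (by omega)]
    have h1 := (LagAux.P_monic (S-1)).coeff_natDegree
    rwa [LagAux.P_natDegree] at h1
end

section
/- Let L be a monic real polynomial of degree |n⃗| satisfying the type II Laguerre orthogonality conditions: ∫_0^∞ x^j L(x) x^{α_i} e^{−x} dx = 0 for every i ∈ {1,…,p} and every j ∈ {0,…,n_i−1}. Then for every real s > 0: ∫_0^∞ L(x) e^{−x} x^{s−1} dx = (−1)^{|n⃗|} Γ(s) ∏_{i=1}^p (α_i+1−s)_{n_i}. -/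
open Finset MeasureTheory

lemma poch_eq_prod (a : ℝ) (m : ℕ) : poch a m = ∏ j ∈ Finset.range m, (a + j) := by
  induction m with
  | zero => simp [poch]
  | succ m ih =>
    rw [poch, ascPochhammer_succ_eval, ← poch, ih, Finset.prod_range_succ]

lemma gamma_add_nat {s : ℝ} (hs : 0 < s) (k : ℕ) :
    Real.Gamma (s + k) = Real.Gamma s * poch s k := by
  induction k with
  | zero => simp [poch]
  | succ k ih =>
    have h1 : s + ((k : ℕ) + 1 : ℕ) = (s + k) + 1 := by push_cast; ring
    rw [h1, Real.Gamma_add_one (by positivity : (0:ℝ) < s + k).ne', ih]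
    rw [show poch s (k+1) = poch s k * (s + k) from ascPochhammer_succ_eval k s]
    ring

lemma mellin_mono_integrable {s : ℝ} (hs : 0 < s) (k : ℕ) :
    IntegrableOn (fun x : ℝ => x ^ k * Real.exp (-x) * x ^ (s - 1)) (Set.Ioi 0) := by
  have h := Real.GammaIntegral_convergent (show (0:ℝ) < s + k by positivity)
  refine h.congr_fun (fun x hx => ?_) measurableSet_Ioi
  have hx0 : (0:ℝ) < x := hx
  beta_reduce
  rw [show s + (k : ℝ) - 1 = (k : ℝ) + (s - 1) by ring, Real.rpow_add hx0, Real.rpow_natCast]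
  ring

lemma mellin_mono_value {s : ℝ} (hs : 0 < s) (k : ℕ) :
    ∫ x in Set.Ioi (0:ℝ), x ^ k * Real.exp (-x) * x ^ (s - 1) = Real.Gamma (s + k) := by
  rw [Real.Gamma_eq_integral (show (0:ℝ) < s + k by positivity)]
  refine setIntegral_congr_fun measurableSet_Ioi fun x hx => ?_
  have hx0 : (0:ℝ) < x := hx
  rw [show s + (k : ℝ) - 1 = (k : ℝ) + (s - 1) by ring, Real.rpow_add hx0, Real.rpow_natCast]
  ring

/-- The Mellin transform of the weighted type II Laguerre (first kind) multiple
orthogonal polynomial: `∫_0^∞ L(x) e^{−x} x^{s−1} dx = (−1)^{|n|} Γ(s) ∏ (α_i+1−s)_{n_i}`. -/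
theorem laguerreI_typeII_mellin
    (p : ℕ) (hp : 0 < p) (n : Fin p → ℕ) (hn : ∀ i, 0 < n i)
    (S : ℕ) (hS : S = ∑ i, n i)
    (α : Fin p → ℝ) (hα : ∀ i, -1 < α i)
    (hαint : ∀ i j, i ≠ j → ∀ z : ℤ, α i - α j ≠ (z : ℝ))
    (L : Polynomial ℝ) (hmonic : L.Monic) (hdeg : L.natDegree = S)
    (horth : ∀ i, ∀ j < n i,
      ∫ x in Set.Ioi (0 : ℝ), x ^ j * L.eval x * x ^ α i * Real.exp (-x) = 0) :
    ∀ s : ℝ, 0 < s →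
      ∫ x in Set.Ioi (0 : ℝ), L.eval x * Real.exp (-x) * x ^ (s - 1) =
        (-1 : ℝ) ^ S * Real.Gamma s * ∏ i, poch (α i + 1 - s) (n i) := by
  classical
  -- the "Mellin polynomial" Q
  set Q : Polynomial ℝ :=
    ∑ k ∈ Finset.range (S + 1), Polynomial.C (L.coeff k) * ascPochhammer ℝ k with hQ
  -- the Mellin transform equals Γ t * Q.eval t
  have key : ∀ t : ℝ, 0 < t →
      (∫ x in Set.Ioi (0:ℝ), L.eval x * Real.exp (-x) * x ^ (t - 1)) =
        Real.Gamma t * Q.eval t := by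
    intro t ht
    have step1 : (∫ x in Set.Ioi (0:ℝ), L.eval x * Real.exp (-x) * x ^ (t - 1)) =
        ∫ x in Set.Ioi (0:ℝ), ∑ k ∈ Finset.range (S + 1),
          L.coeff k * (x ^ k * Real.exp (-x) * x ^ (t - 1)) := by
      refine setIntegral_congr_fun measurableSet_Ioi fun x _ => ?_
      rw [Polynomial.eval_eq_sum_range' (show L.natDegree < S + 1 by omega), Finset.sum_mul,
        Finset.sum_mul]
      exact Finset.sum_congr rfl fun k _ => by ring
    rw [step1, integral_finset_sum _ (fun k _ => (mellin_mono_integrable ht k).const_mul _)]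
    have : ∀ k ∈ Finset.range (S+1),
        (∫ x in Set.Ioi (0:ℝ), L.coeff k * (x ^ k * Real.exp (-x) * x ^ (t-1))) =
        L.coeff k * (Real.Gamma t * poch t k) := fun k _ => by
      rw [integral_const_mul, mellin_mono_value ht k, gamma_add_nat ht k]
    rw [Finset.sum_congr rfl this, hQ]
    simp only [Polynomial.eval_finset_sum, Polynomial.eval_mul, Polynomial.eval_C]
    rw [Finset.mul_sum]
    exact Finset.sum_congr rfl fun k _ => by rw [poch]; ring
  -- Q vanishes at the points α i + 1 + j
  have hroot : ∀ i : Fin p, ∀ j : ℕ, j < n i → Q.eval (α i + 1 + j) = 0 := by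
    intro i j hj
    have ht : (0:ℝ) < α i + 1 + j := by
      have := hα i
      have : (0:ℝ) ≤ j := Nat.cast_nonneg j
      linarith [hα i, (Nat.cast_nonneg j : (0:ℝ) ≤ j)]
    have h0 : (∫ x in Set.Ioi (0:ℝ), L.eval x * Real.exp (-x) * x ^ (α i + 1 + j - 1)) = 0 := by
      have heq : (∫ x in Set.Ioi (0:ℝ), L.eval x * Real.exp (-x) * x ^ (α i + 1 + j - 1)) =
          ∫ x in Set.Ioi (0:ℝ), x ^ j * L.eval x * x ^ α i * Real.exp (-x) := by
        refine setIntegral_congr_fun measurableSet_Ioi fun x hx => ?_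
        have hx0 : (0:ℝ) < x := hx
        rw [show α i + 1 + (j:ℝ) - 1 = α i + (j:ℝ) by ring, Real.rpow_add hx0,
          Real.rpow_natCast]
        ring
      rw [heq, horth i j hj]
    have := key _ ht
    rw [h0] at this
    have hΓ : Real.Gamma (α i + 1 + j) ≠ 0 := (Real.Gamma_pos_of_pos ht).ne'
    exact (mul_eq_zero.mp this.symm).resolve_left hΓ
  -- the target polynomial P
  set P : Polynomial ℝ :=
    ∏ i, ∏ j ∈ Finset.range (n i), (Polynomial.X - Polynomial.C (α i + 1 + j)) with hP
  have hQeqP : Q = P := by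
    have Pmonic : P.Monic :=
      Polynomial.monic_prod_of_monic _ _ fun i _ => Polynomial.monic_prod_of_monic _ _ fun j _ =>
        Polynomial.monic_X_sub_C _
    have hPdeg : P.natDegree = S := by
      rw [hP, Polynomial.natDegree_prod _ _ (fun i _ => (Polynomial.monic_prod_of_monic _ _
          fun j _ => Polynomial.monic_X_sub_C _).ne_zero), hS]
      refine Finset.sum_congr rfl fun i _ => ?_
      rw [Polynomial.natDegree_prod _ _ (fun j _ => Polynomial.X_sub_C_ne_zero _)]
      simp only [Polynomial.natDegree_X_sub_C, Finset.sum_const, Finset.card_range, smul_eq_mul, mul_one]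
    have hPS : P.coeff S = 1 := by
      rw [← hPdeg]; exact Pmonic.coeff_natDegree
    have hLS : L.coeff S = 1 := by rw [← hdeg]; exact hmonic.coeff_natDegree
    have hQS : Q.coeff S = 1 := by
      rw [hQ, Polynomial.finset_sum_coeff, Finset.sum_eq_single S]
      · rw [Polynomial.coeff_C_mul, hLS,
          show (ascPochhammer ℝ S).coeff S = 1 by
            have h1 := (monic_ascPochhammer ℝ S).coeff_natDegree
            rwa [ascPochhammer_natDegree] at h1]
        ring
      · intro k hk hkS
        have hk' : k < S := by have := Finset.mem_range.mp hk; omega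
        rw [Polynomial.coeff_C_mul,
          Polynomial.coeff_eq_zero_of_natDegree_lt (p := ascPochhammer ℝ k)
            (by rw [ascPochhammer_natDegree]; exact hk'), mul_zero]
      · intro h; exact absurd (Finset.self_mem_range_succ S) h
    have hQdeg : Q.natDegree ≤ S := by
      rw [hQ]
      refine Polynomial.natDegree_sum_le_of_forall_le _ _ fun k hk => ?_
      refine le_trans (Polynomial.natDegree_C_mul_le _ _) ?_
      rw [ascPochhammer_natDegree]
      exact Nat.lt_succ_iff.mp (Finset.mem_range.mp hk)
    have hPeval : ∀ i : Fin p, ∀ j : ℕ, j < n i → P.eval (α i + 1 + j) = 0 := by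
      intro i j hj
      rw [hP, Polynomial.eval_prod]
      refine Finset.prod_eq_zero (Finset.mem_univ i) ?_
      rw [Polynomial.eval_prod]
      refine Finset.prod_eq_zero (Finset.mem_range.mpr hj) ?_
      simp
    have hinj : Function.Injective
        (fun ij : (i : Fin p) × Fin (n i) => α ij.1 + 1 + ((ij.2 : ℕ) : ℝ)) := by
      rintro ⟨i, j⟩ ⟨i', j'⟩ h
      simp only at h
      by_cases hii : i = i'
      · subst hii
        have hjj : ((j : ℕ) : ℝ) = ((j' : ℕ) : ℝ) := by linarith
        have : (j : ℕ) = (j' : ℕ) := Nat.cast_injective hjj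
        exact congrArg _ (Fin.ext this)
      · exact absurd (show α i - α i' = (((j' : ℕ) : ℤ) - ((j : ℕ) : ℤ) : ℤ) by
          push_cast; linarith) (hαint i i' hii _)
    have hsub : Q - P = 0 := by
      by_contra hD0
      have hdlt : (Q - P).natDegree < S := by
        rcases lt_or_eq_of_le (le_trans (Polynomial.natDegree_sub_le Q P)
            (max_le hQdeg hPdeg.le)) with h | h
        · exact h
        · exfalso
          have hlc := Polynomial.leadingCoeff_ne_zero.mpr hD0
          rw [Polynomial.leadingCoeff, h, Polynomial.coeff_sub, hQS, hPS] at hlc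
          simp at hlc
      refine hD0 (Polynomial.eq_zero_of_natDegree_lt_card_of_eval_eq_zero (Q - P)
        hinj (fun ij => ?_) ?_)
      · rw [Polynomial.eval_sub, hroot ij.1 (ij.2 : ℕ) ij.2.isLt,
          hPeval ij.1 (ij.2 : ℕ) ij.2.isLt, sub_zero]
      · rw [Fintype.card_sigma]
        simp only [Fintype.card_fin, ← hS]
        exact hdlt
    exact sub_eq_zero.mp hsub

  -- conclude
  intro s hs
  rw [key s hs, hQeqP, hP]
  simp only [Polynomial.eval_prod, Polynomial.eval_sub, Polynomial.eval_X, Polynomial.eval_C]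
  have hrhs : (-1 : ℝ) ^ S * ∏ i, poch (α i + 1 - s) (n i) =
      ∏ i, ∏ j ∈ Finset.range (n i), (s - (α i + 1 + j)) := by
    rw [hS, ← Finset.prod_pow_eq_pow_sum, ← Finset.prod_mul_distrib]
    refine Finset.prod_congr rfl fun i _ => ?_
    rw [poch_eq_prod, show ((-1:ℝ)) ^ n i = ∏ _j ∈ Finset.range (n i), (-1:ℝ) by simp,
      ← Finset.prod_mul_distrib]
    exact Finset.prod_congr rfl fun j _ => by ring
  rw [mul_assoc, ← hrhs]; ring
end
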